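/- arXiv:1309.4585 — 5 statements merged into one kernel-verified Lean document; each statement's English description precedes it below -/
import Mathlib

section
/- Let 0<q<1, w>0, k ∈ ℝ, a_1,…,a_r, b_1,…,b_s ≥ 0, and let f be a positive function on (0,∞) satisfying f(x+w) = ( [x+a_1]_q ⋯ [x+a_r]_q / ([x+b_1]_q ⋯ [x+b_s]_q) )^k f(x) for all x>0 and f(w)=1. If for some integer n≥1 the n-th derivative d^n/dx^n log f(x) exists and is monotone for x>L (for some L≥0), then f(x) = ( ∏_{j=1}^r Γ_{q^w}((x+a_j)/w)/Γ_{q^w}((w+a_j)/w) · ∏_{i=1}^s Γ_{q^w}((w+b_i)/w)/Γ_{q^w}((x+b_i)/w) · [w]_q^{(r−s)(x/w−1)} )^k for all x>0. -/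
open Real Set

/-- The infinite q-Pochhammer symbol `(a;q)_∞ = ∏_{k≥0} (1 - a q^k)`. -/
noncomputable def qPochInf (a q : ℝ) : ℝ := ∏' k : ℕ, (1 - a * q ^ k)

/-- Jackson's q-gamma function for `0 < q < 1`. -/
noncomputable def qGamma (q x : ℝ) : ℝ :=
  qPochInf q q / qPochInf (q ^ x) q * (1 - q) ^ (1 - x)

/-- The q-number `[x]_q = (1 - q^x)/(1 - q)`. -/
noncomputable def qBracket (q x : ℝ) : ℝ := (1 - q ^ x) / (1 - q)

/-- The canonical solution `F` of the functional equation. -/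
noncomputable def mainSol (q w k : ℝ) (r s : ℕ) (a : Fin r → ℝ) (b : Fin s → ℝ)
    (x : ℝ) : ℝ :=
  ((∏ j, qGamma (q ^ w) ((x + a j) / w) / qGamma (q ^ w) ((w + a j) / w)) *
   (∏ i, qGamma (q ^ w) ((w + b i) / w) / qGamma (q ^ w) ((x + b i) / w)) *
   qBracket q w ^ (((r : ℝ) - (s : ℝ)) * (x / w - 1))) ^ k

namespace Stmt10Aux

open Filter Topology


noncomputable def Phi (c : ℝ) (A : ℕ → ℝ) (x : ℝ) : ℝ :=
  ∑' m : ℕ, A m * Real.exp ((m + 1) * c * x)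

def Bd (A : ℕ → ℝ) (C : ℝ) (d : ℕ) : Prop := ∀ m, |A m| ≤ C * (m + 1) ^ d

lemma exp_term_eq {c x : ℝ} (m : ℕ) :
    Real.exp ((m + 1) * c * x) = Real.exp (c * x) ^ (m + 1) := by
  rw [← Real.exp_nat_mul]; congr 1; push_cast; ring

lemma summable_pow_exp {c : ℝ} (hc : c < 0) (C : ℝ) (d : ℕ) {x : ℝ} (hx : 0 < x) :
    Summable (fun m : ℕ => C * (m + 1 : ℝ) ^ d * Real.exp ((m + 1) * c * x)) := by
  set r := Real.exp (c * x) with hr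
  have hrlt : ‖r‖ < 1 := by
    rw [Real.norm_eq_abs, abs_of_pos (Real.exp_pos _), Real.exp_lt_one_iff]
    exact mul_neg_of_neg_of_pos hc hx
  have h1 : Summable (fun n : ℕ => (n : ℝ) ^ d * r ^ n) :=
    summable_pow_mul_geometric_of_norm_lt_one d hrlt
  have h2 : Summable (fun m : ℕ => ((m + 1 : ℕ) : ℝ) ^ d * r ^ (m + 1)) :=
    h1.comp_injective Nat.succ_injective
  refine (h2.mul_left C).congr fun m => ?_
  rw [exp_term_eq]
  push_cast
  ring

lemma Bd.nonneg {A C d} (hA : Bd A C d) : 0 ≤ C := by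
  have h := hA 0
  simp at h
  exact (abs_nonneg (A 0)).trans h

lemma term_abs_le {c : ℝ} {A C d} (hA : Bd A C d) (m : ℕ) (x : ℝ) :
    |A m * Real.exp ((m + 1) * c * x)| ≤ C * (m + 1 : ℝ) ^ d * Real.exp ((m + 1) * c * x) := by
  rw [abs_mul, abs_of_pos (Real.exp_pos _)]
  exact mul_le_mul_of_nonneg_right (hA m) (Real.exp_pos _).le

lemma summable_term {c : ℝ} (hc : c < 0) {A C d} (hA : Bd A C d) {x : ℝ} (hx : 0 < x) :
    Summable (fun m : ℕ => A m * Real.exp ((m + 1) * c * x)) := by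
  refine Summable.of_abs (((summable_pow_exp hc C d hx)).of_nonneg_of_le
    (fun m => abs_nonneg _) (fun m => term_abs_le hA m x))

lemma abs_Phi_le {c : ℝ} (hc : c < 0) {A C d} (hA : Bd A C d) {x : ℝ} (hx : 0 < x) :
    |Phi c A x| ≤ ∑' m : ℕ, C * (m + 1 : ℝ) ^ d * Real.exp ((m + 1) * c * x) := by
  have h0 : Summable fun m : ℕ => |A m * Real.exp ((m + 1) * c * x)| :=
    (summable_term hc hA hx).abs
  have h1 := norm_tsum_le_tsum_norm (f := fun m : ℕ => A m * Real.exp ((m + 1) * c * x))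
    (by simpa only [Real.norm_eq_abs] using h0)
  simp only [Real.norm_eq_abs] at h1
  exact h1.trans (Summable.tsum_le_tsum (fun m => term_abs_le hA m x) h0 (summable_pow_exp hc C d hx))

lemma hasDerivAt_Phi {c : ℝ} (hc : c < 0) {A C d} (hA : Bd A C d) {x : ℝ} (hx : 0 < x) :
    HasDerivAt (Phi c A) (Phi c (fun m => A m * ((m + 1) * c)) x) x := by
  have hhalf : 0 < x / 2 := by linarith
  have hx2 : x ∈ Ioi (x / 2) := by simp only [mem_Ioi]; linarith
  have hterm : ∀ (m : ℕ) (y : ℝ), HasDerivAt (fun z => A m * Real.exp ((m + 1) * c * z))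
      (A m * ((m + 1) * c) * Real.exp ((m + 1) * c * y)) y := by
    intro m y
    have h := ((hasDerivAt_id y).const_mul ((m + 1 : ℝ) * c)).exp
    have h2 := h.const_mul (A m)
    simpa [mul_comm, mul_assoc, mul_left_comm] using h2
  exact hasDerivAt_tsum_of_isPreconnected
    (u := fun m : ℕ => (C * |c|) * (m + 1 : ℝ) ^ (d + 1) * Real.exp ((m + 1) * c * (x / 2)))
    (summable_pow_exp hc (C * |c|) (d + 1) hhalf) isOpen_Ioi (convex_Ioi (x/2)).isPreconnected
    (fun m y _ => hterm m y)
    (fun m y hy => by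
      have hyx : x / 2 ≤ y := le_of_lt hy
      have hCn : 0 ≤ C * (m + 1 : ℝ) ^ d := le_trans (abs_nonneg _) (hA m)
      have hexp : Real.exp ((m + 1) * c * y) ≤ Real.exp ((m + 1) * c * (x / 2)) := by
        apply Real.exp_le_exp.2
        have hmc : (m + 1 : ℝ) * c < 0 := mul_neg_of_pos_of_neg (by positivity) hc
        nlinarith
      rw [Real.norm_eq_abs, abs_mul]
      calc |A m * ((m + 1 : ℝ) * c)| * |Real.exp ((m + 1) * c * y)|
          = (|A m| * ((m + 1 : ℝ) * |c|)) * Real.exp ((m + 1) * c * y) := by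
            rw [abs_of_pos (Real.exp_pos _), abs_mul, abs_mul,
              abs_of_pos (by positivity : (0:ℝ) < (m + 1 : ℝ))]
        _ ≤ ((C * (m + 1 : ℝ) ^ d) * ((m + 1 : ℝ) * |c|)) * Real.exp ((m + 1) * c * y) :=
            mul_le_mul_of_nonneg_right
              (mul_le_mul_of_nonneg_right (hA m) (by positivity)) (Real.exp_pos _).le
        _ ≤ ((C * (m + 1 : ℝ) ^ d) * ((m + 1 : ℝ) * |c|)) * Real.exp ((m + 1) * c * (x / 2)) :=
            mul_le_mul_of_nonneg_left hexp (mul_nonneg hCn (by positivity))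
        _ = (C * |c|) * (m + 1 : ℝ) ^ (d + 1) * Real.exp ((m + 1) * c * (x / 2)) := by
            rw [pow_succ]; ring)
    hx2 (summable_term hc hA hx) hx2

lemma Bd.mulWeight {A C d} (hA : Bd A C d) (c : ℝ) (N : ℕ) :
    Bd (fun m => A m * ((m + 1) * c) ^ N) (C * |c| ^ N) (d + N) := by
  intro m
  dsimp only
  rw [abs_mul, abs_pow, abs_mul, abs_of_pos (by positivity : (0:ℝ) < (m + 1 : ℝ)), mul_pow,
    pow_add]
  calc |A m| * ((m + 1 : ℝ) ^ N * |c| ^ N)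
      ≤ (C * (m + 1 : ℝ) ^ d) * ((m + 1 : ℝ) ^ N * |c| ^ N) := by
        exact mul_le_mul_of_nonneg_right (hA m) (by positivity)
    _ = C * |c| ^ N * ((m + 1 : ℝ) ^ d * (m + 1 : ℝ) ^ N) := by ring

lemma iteratedDeriv_Phi {c : ℝ} (hc : c < 0) {A C d} (hA : Bd A C d) (N : ℕ) :
    ∀ x > (0:ℝ), iteratedDeriv N (Phi c A) x = Phi c (fun m => A m * ((m + 1) * c) ^ N) x := by
  induction N with
  | zero => intro x _; simp [iteratedDeriv_zero, Phi]
  | succ N IH =>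
    intro x hx
    rw [iteratedDeriv_succ]
    have hev : iteratedDeriv N (Phi c A) =ᶠ[𝓝 x]
        Phi c (fun m => A m * ((m + 1) * c) ^ N) := by
      filter_upwards [isOpen_Ioi.mem_nhds (show x ∈ Ioi (0:ℝ) from hx)] with y hy
      exact IH y hy
    rw [hev.deriv_eq]
    have h := (hasDerivAt_Phi hc (hA.mulWeight c N) hx).deriv
    rw [h]
    unfold Phi
    congr 1
    funext m
    ring

lemma contDiffOn_Phi {c : ℝ} (hc : c < 0) {A C d} (hA : Bd A C d) (N : ℕ) :
    ContDiffOn ℝ N (Phi c A) (Ioi 0) := by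
  induction N generalizing A C d with
  | zero =>
    simp only [Nat.cast_zero, contDiffOn_zero]
    exact fun x hx => (hasDerivAt_Phi hc hA hx).continuousAt.continuousWithinAt
  | succ N IH =>
    have hcast : ((N + 1 : ℕ) : WithTop ℕ∞) = (N : ℕ) + 1 := by norm_cast
    rw [hcast, contDiffOn_succ_iff_derivWithin isOpen_Ioi.uniqueDiffOn]
    refine ⟨fun x hx => (hasDerivAt_Phi hc hA hx).differentiableAt.differentiableWithinAt,
      by simp, ?_⟩
    have heq : EqOn (derivWithin (Phi c A) (Ioi 0))
        (Phi c (fun m => A m * ((m + 1) * c))) (Ioi 0) := by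
      intro x hx
      rw [derivWithin_of_isOpen isOpen_Ioi hx, (hasDerivAt_Phi hc hA hx).deriv]
    have hA' : Bd (fun m => A m * ((m + 1) * c)) (C * |c|) (d + 1) := by
      have h := hA.mulWeight c 1
      simpa [pow_one] using h
    exact (IH hA').congr heq

lemma tendsto_Phi {c : ℝ} (hc : c < 0) {A C d} (hA : Bd A C d) :
    Tendsto (Phi c A) atTop (𝓝 0) := by
  set K := ∑' m : ℕ, C * (m + 1 : ℝ) ^ d * Real.exp ((m + 1) * c * 1) with hK
  have hb : ∀ x ≥ (1:ℝ), |Phi c A x| ≤ K * Real.exp (c * (x - 1)) := by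
    intro x hx1
    have hx : (0:ℝ) < x := by linarith
    refine (abs_Phi_le hc hA hx).trans ?_
    rw [← tsum_mul_right]
    refine Summable.tsum_le_tsum (fun m => ?_) (summable_pow_exp hc C d hx)
      ((summable_pow_exp hc C d one_pos).mul_right _)
    have hCn : 0 ≤ C * (m + 1 : ℝ) ^ d := le_trans (abs_nonneg _) (hA m)
    have : Real.exp ((m + 1) * c * x) ≤ Real.exp ((m + 1) * c * 1) * Real.exp (c * (x - 1)) := by
      rw [← Real.exp_add]
      apply Real.exp_le_exp.2
      have h1 : (m:ℝ) * c * (x - 1) ≤ 0 :=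
        mul_nonpos_of_nonpos_of_nonneg (mul_nonpos_of_nonneg_of_nonpos (by positivity) hc.le)
          (by linarith)
      nlinarith
    calc C * (m + 1 : ℝ) ^ d * Real.exp ((m + 1) * c * x)
        ≤ C * (m + 1 : ℝ) ^ d * (Real.exp ((m + 1) * c * 1) * Real.exp (c * (x - 1))) :=
          mul_le_mul_of_nonneg_left this hCn
      _ = C * (m + 1 : ℝ) ^ d * Real.exp ((m + 1) * c * 1) * Real.exp (c * (x - 1)) := by ring
  have hexp : Tendsto (fun x : ℝ => K * Real.exp (c * (x - 1))) atTop (𝓝 0) := by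
    rw [show (0:ℝ) = K * 0 by ring]
    apply Tendsto.const_mul
    apply Real.tendsto_exp_atBot.comp
    exact Tendsto.neg_mul_atTop hc tendsto_const_nhds
      (tendsto_atTop_add_const_right atTop (-1) tendsto_id)
  apply squeeze_zero_norm' _ hexp
  filter_upwards [eventually_ge_atTop (1:ℝ)] with x hx
  exact hb x hx


/-! ### The log of the q-Pochhammer product as an explicit series -/

lemma hasSum_log_poch {p t : ℝ} (hp0 : 0 < p) (hp1 : p < 1) (ht0 : 0 ≤ t) (ht1 : t < 1) :
    HasSum (fun j : ℕ => Real.log (1 - t * p ^ j))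
      (∑' m : ℕ, -(t ^ (m + 1) / ((m + 1) * (1 - p ^ (m + 1))))) := by
  set F : ℕ × ℕ → ℝ := fun jm => -((t * p ^ jm.1) ^ (jm.2 + 1) / (jm.2 + 1)) with hF
  have htpj : ∀ j : ℕ, 0 ≤ t * p ^ j ∧ t * p ^ j < 1 := by
    intro j
    constructor
    · positivity
    · calc t * p ^ j ≤ t * 1 := by
            have := pow_le_one₀ hp0.le hp1.le (n := j)
            nlinarith
        _ < 1 := by linarith
  have hlog : ∀ j : ℕ, HasSum (fun m => F (j, m)) (Real.log (1 - t * p ^ j)) := by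
    intro j
    have habs : |t * p ^ j| < 1 := by
      rw [abs_of_nonneg (htpj j).1]; exact (htpj j).2
    have h := (hasSum_pow_div_log_of_abs_lt_one habs).neg
    simpa [hF] using h
  have habsF : Summable fun jm => |F jm| := by
    rw [summable_prod_of_nonneg (fun jm => abs_nonneg _)]
    constructor
    · intro j
      apply Summable.of_nonneg_of_le (fun m => abs_nonneg _)
        (fun m => ?_) (summable_geometric_of_lt_one (htpj j).1 (htpj j).2 |>.comp_injective
          Nat.succ_injective)
      show |F (j, m)| ≤ (t * p ^ j) ^ (m + 1)
      rw [hF, abs_neg, abs_div]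
      rw [abs_of_nonneg (by positivity), abs_of_nonneg (by positivity : (0:ℝ) ≤ (m:ℝ)+1)]
      rw [div_le_iff₀ (by positivity : (0:ℝ) < (m:ℝ)+1)]
      nlinarith [pow_nonneg (htpj j).1 (m+1), (le_add_of_nonneg_left (by positivity : (0:ℝ) ≤ (m:ℝ)) : (1:ℝ) ≤ m + 1)]
    · apply Summable.of_nonneg_of_le (fun j => tsum_nonneg (fun m => abs_nonneg _))
        (fun j => ?_) ((summable_geometric_of_lt_one hp0.le hp1).mul_left (t / (1 - t)))
      have hrow : ∀ m : ℕ, |F (j, m)| ≤ (t ^ (m + 1) * p ^ j) := by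
        intro m
        have h1 : |F (j, m)| ≤ (t * p ^ j) ^ (m + 1) := by
          rw [hF, abs_neg, abs_div]
          rw [abs_of_nonneg (by positivity), abs_of_nonneg (by positivity : (0:ℝ) ≤ (m:ℝ)+1)]
          rw [div_le_iff₀ (by positivity : (0:ℝ) < (m:ℝ)+1)]
          nlinarith [pow_nonneg (htpj j).1 (m+1), (le_add_of_nonneg_left (by positivity : (0:ℝ) ≤ (m:ℝ)) : (1:ℝ) ≤ m + 1)]
        refine h1.trans ?_
        rw [mul_pow]
        apply mul_le_mul_of_nonneg_left _ (by positivity)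
        calc (p ^ j) ^ (m + 1) = p ^ j * (p ^ j) ^ m := by rw [pow_succ]; ring
          _ ≤ p ^ j * 1 := by
              apply mul_le_mul_of_nonneg_left (pow_le_one₀ (by positivity) (pow_le_one₀ hp0.le hp1.le)) (by positivity)
          _ = p ^ j := by ring
      have hsum_bound : Summable fun m : ℕ => t ^ (m + 1) * p ^ j :=
        ((summable_geometric_of_lt_one ht0 ht1).comp_injective Nat.succ_injective).mul_right _
      refine le_trans (Summable.tsum_le_tsum hrow ?_ hsum_bound) ?_
      · exact Summable.of_nonneg_of_le (fun m => abs_nonneg _) hrow hsum_bound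
      · rw [tsum_mul_right]
        apply mul_le_mul_of_nonneg_right _ (by positivity)
        have : ∑' m : ℕ, t ^ (m + 1) = t * ∑' m : ℕ, t ^ m := by
          rw [← tsum_mul_left]; congr 1; funext m; rw [pow_succ]; ring
        rw [this, tsum_geometric_of_lt_one ht0 ht1]
        rw [div_eq_mul_inv]
  have hFsummable : Summable F := summable_abs_iff.mp habsF
  have houter : HasSum (fun j : ℕ => Real.log (1 - t * p ^ j)) (∑' jm : ℕ × ℕ, F jm) :=
    hFsummable.hasSum.prod_fiberwise hlog
  have hvalm : ∀ m : ℕ, HasSum (fun j => F (j, m))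
      (-(t ^ (m + 1) / ((m + 1) * (1 - p ^ (m + 1))))) := by
    intro m
    have hp1m : p ^ (m + 1) < 1 := pow_lt_one₀ hp0.le hp1 (Nat.succ_ne_zero m)
    have hgeom := hasSum_geometric_of_lt_one (by positivity : (0:ℝ) ≤ p ^ (m+1)) hp1m
    have h := hgeom.mul_left (-(t ^ (m + 1) / (m + 1)))
    have heq : (fun j : ℕ => -(t ^ (m + 1) / (m + 1)) * (p ^ (m + 1)) ^ j) =
        fun j : ℕ => F (j, m) := by
      funext j
      rw [hF]
      simp only
      rw [mul_pow, ← pow_mul, ← pow_mul, Nat.mul_comm]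
      ring
    rw [heq] at h
    rw [show -(t ^ (m + 1) / ((m + 1) * (1 - p ^ (m + 1)))) =
      -(t ^ (m + 1) / (m + 1)) * (1 - p ^ (m + 1))⁻¹ by
        rw [neg_mul, ← div_eq_mul_inv, div_div]]
    have hne : (1:ℝ) - p ^ (m+1) ≠ 0 := by linarith
    exact h
  have hswap : Summable fun mj : ℕ × ℕ => F mj.swap := hFsummable.prod_symm
  have hsum_m : HasSum (fun m : ℕ => -(t ^ (m + 1) / ((m + 1) * (1 - p ^ (m + 1)))))
      (∑' mj : ℕ × ℕ, F mj.swap) :=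
    hswap.hasSum.prod_fiberwise (fun m => hvalm m)
  have hswap_eq : ∑' mj : ℕ × ℕ, F mj.swap = ∑' jm : ℕ × ℕ, F jm := by
    exact (Equiv.prodComm ℕ ℕ).tsum_eq F
  rw [hsum_m.tsum_eq, hswap_eq]
  exact houter

lemma hasProd_poch {p t : ℝ} (hp0 : 0 < p) (hp1 : p < 1) (ht0 : 0 ≤ t) (ht1 : t < 1) :
    HasProd (fun j : ℕ => 1 - t * p ^ j)
      (Real.exp (∑' m : ℕ, -(t ^ (m + 1) / ((m + 1) * (1 - p ^ (m + 1)))))) := by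
  have h := (hasSum_log_poch hp0 hp1 ht0 ht1).rexp
  have heq : (rexp ∘ fun j : ℕ => Real.log (1 - t * p ^ j)) = fun j : ℕ => 1 - t * p ^ j := by
    funext j
    have hpos : 0 < 1 - t * p ^ j := by
      have h1 : t * p ^ j ≤ t * 1 := by
        have := pow_le_one₀ hp0.le hp1.le (n := j); nlinarith
      linarith
    simp only [Function.comp_apply]
    exact Real.exp_log hpos
  rwa [heq] at h

lemma qPochInf_eq {p t : ℝ} (hp0 : 0 < p) (hp1 : p < 1) (ht0 : 0 ≤ t) (ht1 : t < 1) :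
    qPochInf t p = Real.exp (∑' m : ℕ, -(t ^ (m + 1) / ((m + 1) * (1 - p ^ (m + 1))))) :=
  (hasProd_poch hp0 hp1 ht0 ht1).tprod_eq

lemma qPochInf_pos {p t : ℝ} (hp0 : 0 < p) (hp1 : p < 1) (ht0 : 0 ≤ t) (ht1 : t < 1) :
    0 < qPochInf t p := by
  rw [qPochInf_eq hp0 hp1 ht0 ht1]; exact Real.exp_pos _

lemma log_qPochInf {p t : ℝ} (hp0 : 0 < p) (hp1 : p < 1) (ht0 : 0 ≤ t) (ht1 : t < 1) :
    Real.log (qPochInf t p) = ∑' m : ℕ, -(t ^ (m + 1) / ((m + 1) * (1 - p ^ (m + 1)))) := by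
  rw [qPochInf_eq hp0 hp1 ht0 ht1, Real.log_exp]

/-! ### Stage 3: log of qGamma at shifted arguments as Phi series -/

section Stage3

variable {q w : ℝ}

/-- coefficients for `log (q^(x+s0); q^w)_∞` as a series in `x` -/
noncomputable def LA (q w s0 : ℝ) : ℕ → ℝ :=
  fun m => -(q ^ ((m + 1 : ℝ) * s0) / ((m + 1) * (1 - (q ^ w) ^ (m + 1))))

/-- coefficients for `log (1 - q^(x+s0))` as a series in `x` -/
noncomputable def LE (q s0 : ℝ) : ℕ → ℝ :=
  fun m => -(q ^ ((m + 1 : ℝ) * s0) / (m + 1))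

lemma rpow_term (hq0 : 0 < q) (m : ℕ) (x s0 : ℝ) :
    (q ^ (x + s0) : ℝ) ^ (m + 1) =
      q ^ ((m + 1 : ℝ) * s0) * Real.exp ((m + 1) * Real.log q * x) := by
  have h1 : ((q : ℝ) ^ (x + s0)) ^ (m + 1) = q ^ ((x + s0) * ((m : ℝ) + 1)) := by
    rw [← Real.rpow_natCast (q ^ (x + s0)) (m + 1), ← Real.rpow_mul hq0.le]
    norm_num
  rw [h1, show (x + s0) * ((m : ℝ) + 1) = ((m : ℝ) + 1) * x + ((m : ℝ) + 1) * s0 by ring,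
    Real.rpow_add hq0]
  rw [Real.rpow_def_of_pos hq0 (((m : ℝ) + 1) * x)]
  ring_nf

lemma hp0 (hq0 : 0 < q) : (0:ℝ) < q ^ w := Real.rpow_pos_of_pos hq0 w

lemma hp1 (hq0 : 0 < q) (hq1 : q < 1) (hw : 0 < w) : q ^ w < 1 :=
  Real.rpow_lt_one hq0.le hq1 hw

lemma Bd_LA (hq0 : 0 < q) (hq1 : q < 1) (hw : 0 < w) {s0 : ℝ} (hs0 : 0 ≤ s0) :
    Bd (LA q w s0) ((1 - q ^ w)⁻¹) 0 := by
  intro m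
  have hP0 := hp0 (w := w) hq0
  have hP1 := hp1 hq0 hq1 hw
  have hnum : q ^ ((m + 1 : ℝ) * s0) ≤ 1 :=
    Real.rpow_le_one hq0.le hq1.le (mul_nonneg (by positivity) hs0)
  have hnum0 : 0 < q ^ ((m + 1 : ℝ) * s0) := Real.rpow_pos_of_pos hq0 _
  have hpm : (q ^ w) ^ (m + 1) ≤ q ^ w := by
    calc (q ^ w) ^ (m + 1) = q ^ w * (q ^ w) ^ m := by rw [pow_succ]; ring
      _ ≤ q ^ w * 1 := by
          exact mul_le_mul_of_nonneg_left (pow_le_one₀ hP0.le hP1.le) hP0.le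
      _ = q ^ w := by ring
  have hden : 1 - q ^ w ≤ ((m : ℝ) + 1) * (1 - (q ^ w) ^ (m + 1)) := by
    have h1 : (1:ℝ) ≤ (m : ℝ) + 1 := by
      have : (0:ℝ) ≤ (m:ℝ) := Nat.cast_nonneg m
      linarith
    have h2 : 1 - q ^ w ≤ 1 - (q ^ w) ^ (m + 1) := by linarith
    nlinarith
  have hden0 : 0 < 1 - q ^ w := by linarith
  have hden0' : 0 < ((m : ℝ) + 1) * (1 - (q ^ w) ^ (m + 1)) := by
    have : (q ^ w) ^ (m+1) < 1 := lt_of_le_of_lt hpm hP1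
    have : (0:ℝ) < 1 - (q ^ w) ^ (m+1) := by linarith
    positivity
  rw [LA]
  simp only [abs_neg, pow_zero, mul_one]
  rw [abs_div, abs_of_pos hnum0, abs_of_pos hden0']
  calc q ^ ((m + 1 : ℝ) * s0) / (((m:ℝ) + 1) * (1 - (q ^ w) ^ (m + 1)))
      ≤ 1 / (1 - q ^ w) := div_le_div₀ zero_le_one hnum hden0 hden
    _ = (1 - q ^ w)⁻¹ := one_div _

lemma Bd_LE (hq0 : 0 < q) (hq1 : q < 1) {s0 : ℝ} (hs0 : 0 ≤ s0) :
    Bd (LE q s0) 1 0 := by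
  intro m
  have hnum : q ^ ((m + 1 : ℝ) * s0) ≤ 1 :=
    Real.rpow_le_one hq0.le hq1.le (mul_nonneg (by positivity) hs0)
  have hnum0 : 0 < q ^ ((m + 1 : ℝ) * s0) := Real.rpow_pos_of_pos hq0 _
  have h1 : (1:ℝ) ≤ (m:ℝ) + 1 := by
    have : (0:ℝ) ≤ (m:ℝ) := Nat.cast_nonneg m
    linarith
  rw [LE]
  simp only [abs_neg, pow_zero, mul_one]
  rw [abs_div, abs_of_pos hnum0, abs_of_pos (by linarith : (0:ℝ) < (m:ℝ)+1)]
  rw [div_le_one (by linarith)]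
  linarith

lemma logPochShift (hq0 : 0 < q) (hq1 : q < 1) (hw : 0 < w) {x : ℝ} (hx : 0 < x)
    {s0 : ℝ} (hs0 : 0 ≤ s0) :
    Real.log (qPochInf (q ^ (x + s0)) (q ^ w)) = Phi (Real.log q) (LA q w s0) x := by
  have ht0 : (0:ℝ) ≤ q ^ (x + s0) := (Real.rpow_pos_of_pos hq0 _).le
  have ht1 : q ^ (x + s0) < 1 := Real.rpow_lt_one hq0.le hq1 (by linarith)
  rw [log_qPochInf (hp0 hq0) (hp1 hq0 hq1 hw) ht0 ht1]
  unfold Phi LA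
  congr 1
  funext m
  rw [rpow_term hq0 m x s0]
  ring

lemma logOneSub (hq0 : 0 < q) (hq1 : q < 1) {x : ℝ} (hx : 0 < x) {s0 : ℝ} (hs0 : 0 ≤ s0) :
    Real.log (1 - q ^ (x + s0)) = Phi (Real.log q) (LE q s0) x := by
  have ht0 : (0:ℝ) ≤ q ^ (x + s0) := (Real.rpow_pos_of_pos hq0 _).le
  have ht1 : q ^ (x + s0) < 1 := Real.rpow_lt_one hq0.le hq1 (by linarith)
  have habs : |q ^ (x + s0)| < 1 := by rwa [abs_of_nonneg ht0]
  have h := (hasSum_pow_div_log_of_abs_lt_one habs).neg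
  rw [neg_neg] at h
  rw [← h.tsum_eq]
  unfold Phi LE
  congr 1
  funext m
  rw [rpow_term hq0 m x s0]
  ring

lemma qPochShift_pos (hq0 : 0 < q) (hq1 : q < 1) (hw : 0 < w) {y : ℝ} (hy : 0 < y) :
    0 < qPochInf (q ^ y) (q ^ w) :=
  qPochInf_pos (hp0 hq0) (hp1 hq0 hq1 hw) (Real.rpow_pos_of_pos hq0 _).le
    (Real.rpow_lt_one hq0.le hq1 hy)

lemma pPow_eq (hq0 : 0 < q) (hw : 0 < w) (y : ℝ) : ((q ^ w : ℝ) ^ (y / w)) = q ^ y := by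
  rw [← Real.rpow_mul hq0.le w (y / w)]
  congr 1
  field_simp

lemma qGammaShift_pos (hq0 : 0 < q) (hq1 : q < 1) (hw : 0 < w) {y : ℝ} (hy : 0 < y) :
    0 < qGamma (q ^ w) (y / w) := by
  unfold qGamma
  have h1 : 0 < qPochInf (q ^ w) (q ^ w) :=
    qPochInf_pos (hp0 hq0) (hp1 hq0 hq1 hw) (hp0 hq0).le (hp1 hq0 hq1 hw)
  have h2 : 0 < qPochInf ((q ^ w : ℝ) ^ (y / w)) (q ^ w) := by
    rw [pPow_eq hq0 hw]
    exact qPochShift_pos hq0 hq1 hw hy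
  have h3 : (0:ℝ) < 1 - q ^ w := by linarith [hp1 (w := w) hq0 hq1 hw]
  positivity

lemma log_qGamma_shift (hq0 : 0 < q) (hq1 : q < 1) (hw : 0 < w) {x : ℝ} (hx : 0 < x)
    {s0 : ℝ} (hs0 : 0 ≤ s0) :
    Real.log (qGamma (q ^ w) ((x + s0) / w)) =
      Real.log (qPochInf (q ^ w) (q ^ w)) - Phi (Real.log q) (LA q w s0) x
        + (1 - (x + s0) / w) * Real.log (1 - q ^ w) := by
  have h1 : 0 < qPochInf (q ^ w) (q ^ w) :=
    qPochInf_pos (hp0 hq0) (hp1 hq0 hq1 hw) (hp0 hq0).le (hp1 hq0 hq1 hw)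
  have h2' : 0 < qPochInf (q ^ (x + s0)) (q ^ w) := qPochShift_pos hq0 hq1 hw (by linarith)
  have h3 : (0:ℝ) < 1 - q ^ w := by linarith [hp1 (w := w) hq0 hq1 hw]
  unfold qGamma
  rw [pPow_eq hq0 hw]
  rw [Real.log_mul (by positivity) (by positivity : ((1:ℝ) - q ^ w) ^ (1 - (x + s0)/w) ≠ 0)]
  rw [Real.log_div h1.ne' h2'.ne', Real.log_rpow h3]
  rw [logPochShift hq0 hq1 hw hx hs0]

end Stage3

/-! ### Stage 4: Phi algebra and the series form of `log mainSol` -/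

section Stage4

variable {q w : ℝ}

lemma Bd_finsum {ι : Type*} [Fintype ι] {As : ι → ℕ → ℝ} {Cs : ι → ℝ} {d : ℕ}
    (h : ∀ i, Bd (As i) (Cs i) d) : Bd (fun m => ∑ i, As i m) (∑ i, Cs i) d := by
  intro m
  calc |∑ i, As i m| ≤ ∑ i, |As i m| := Finset.abs_sum_le_sum_abs _ _
    _ ≤ ∑ i, Cs i * (m + 1 : ℝ) ^ d := Finset.sum_le_sum (fun i _ => h i m)
    _ = (∑ i, Cs i) * (m + 1 : ℝ) ^ d := by rw [Finset.sum_mul]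

lemma Bd_sub {A B : ℕ → ℝ} {CA CB : ℝ} {d : ℕ} (hA : Bd A CA d) (hB : Bd B CB d) :
    Bd (fun m => A m - B m) (CA + CB) d := by
  intro m
  calc |A m - B m| ≤ |A m| + |B m| := abs_sub _ _
    _ ≤ CA * (m + 1 : ℝ) ^ d + CB * (m + 1 : ℝ) ^ d := add_le_add (hA m) (hB m)
    _ = (CA + CB) * (m + 1 : ℝ) ^ d := by ring

lemma Phi_sub {c : ℝ} (hc : c < 0) {A B : ℕ → ℝ} {CA CB : ℝ} {dA dB : ℕ}
    (hA : Bd A CA dA) (hB : Bd B CB dB) {x : ℝ} (hx : 0 < x) :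
    Phi c (fun m => A m - B m) x = Phi c A x - Phi c B x := by
  unfold Phi
  rw [← Summable.tsum_sub (summable_term hc hA hx) (summable_term hc hB hx)]
  congr 1; funext m; ring

lemma Phi_finsum {ι : Type*} [Fintype ι] {c : ℝ} (hc : c < 0) {As : ι → ℕ → ℝ}
    {Cs : ι → ℝ} {d : ℕ} (hAs : ∀ i, Bd (As i) (Cs i) d) {x : ℝ} (hx : 0 < x) :
    Phi c (fun m => ∑ i, As i m) x = ∑ i, Phi c (As i) x := by
  unfold Phi
  calc ∑' m : ℕ, (∑ i, As i m) * Real.exp ((m + 1) * c * x)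
      = ∑' m : ℕ, ∑ i, As i m * Real.exp ((m + 1) * c * x) := by
        congr 1; funext m; rw [Finset.sum_mul]
    _ = ∑ i, ∑' m : ℕ, As i m * Real.exp ((m + 1) * c * x) :=
        Summable.tsum_finsetSum (fun i _ => summable_term hc (hAs i) hx)

lemma hlogq_neg (hq0 : 0 < q) (hq1 : q < 1) : Real.log q < 0 := Real.log_neg hq0 hq1

lemma qw_pow_eq_exp (hq0 : 0 < q) (m : ℕ) :
    ((q ^ w : ℝ)) ^ (m + 1) = Real.exp ((m + 1) * Real.log q * w) := by
  rw [Real.rpow_def_of_pos hq0, ← Real.exp_nat_mul]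
  congr 1
  push_cast
  ring

lemma Phi_shift (hq0 : 0 < q) {A : ℕ → ℝ} (x : ℝ) :
    Phi (Real.log q) A (x + w) =
      Phi (Real.log q) (fun m => A m * (q ^ w) ^ (m + 1)) x := by
  unfold Phi
  congr 1
  funext m
  dsimp only
  rw [qw_pow_eq_exp hq0 m,
    show ((m:ℝ) + 1) * Real.log q * (x + w)
      = ((m:ℝ) + 1) * Real.log q * x + ((m:ℝ) + 1) * Real.log q * w by ring,
    Real.exp_add]
  ring

lemma Bd_mul_qwpow (hq0 : 0 < q) (hq1 : q < 1) (hw : 0 < w) {A : ℕ → ℝ} {C : ℝ} {d : ℕ}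
    (hA : Bd A C d) : Bd (fun m => A m * (q ^ w) ^ (m + 1)) C d := by
  intro m
  dsimp only
  rw [abs_mul]
  have h1 : |(q ^ w : ℝ) ^ (m + 1)| ≤ 1 := by
    rw [abs_of_pos (by positivity)]
    exact pow_le_one₀ (hp0 (w := w) hq0).le (hp1 (w := w) hq0 hq1 hw).le
  calc |A m| * |(q ^ w : ℝ) ^ (m + 1)| ≤ |A m| * 1 :=
        mul_le_mul_of_nonneg_left h1 (abs_nonneg _)
    _ = |A m| := by ring
    _ ≤ C * (m + 1 : ℝ) ^ d := hA m

/-- coefficients of the series of `log mainSol` -/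
noncomputable def BC (q w : ℝ) {r s : ℕ} (a : Fin r → ℝ) (b : Fin s → ℝ) : ℕ → ℝ :=
  fun m => (∑ i, LA q w (b i) m) - (∑ j, LA q w (a j) m)

/-- slope of the affine part of the series of `log mainSol` -/
noncomputable def BETA (q w : ℝ) (r s : ℕ) : ℝ :=
  ((r : ℝ) - s) * (Real.log (qBracket q w) - Real.log (1 - q ^ w)) / w

lemma Bd_BC (hq0 : 0 < q) (hq1 : q < 1) (hw : 0 < w) {r s : ℕ} {a : Fin r → ℝ}
    {b : Fin s → ℝ} (ha : ∀ i, 0 ≤ a i) (hb : ∀ j, 0 ≤ b j) :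
    Bd (BC q w a b) ((∑ _i : Fin s, (1 - q ^ w)⁻¹) + (∑ _j : Fin r, (1 - q ^ w)⁻¹)) 0 :=
  Bd_sub (Bd_finsum (fun i => Bd_LA hq0 hq1 hw (hb i)))
    (Bd_finsum (fun j => Bd_LA hq0 hq1 hw (ha j)))

lemma qBracket_pos (hq0 : 0 < q) (hq1 : q < 1) {y : ℝ} (hy : 0 < y) :
    0 < qBracket q y := by
  unfold qBracket
  have h1 : q ^ y < 1 := Real.rpow_lt_one hq0.le hq1 hy
  have h2 : (0:ℝ) < 1 - q := by linarith
  have h3 : (0:ℝ) < 1 - q ^ y := by linarith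
  positivity

lemma ratio_log (hq0 : 0 < q) (hq1 : q < 1) (hw : 0 < w) {x s0 : ℝ} (hx : 0 < x)
    (hs0 : 0 ≤ s0) :
    Real.log (qGamma (q ^ w) ((x + s0) / w) / qGamma (q ^ w) ((w + s0) / w)) =
      Phi (Real.log q) (LA q w s0) w - Phi (Real.log q) (LA q w s0) x
        + (w - x) / w * Real.log (1 - q ^ w) := by
  have hg1 : 0 < qGamma (q ^ w) ((x + s0) / w) := qGammaShift_pos hq0 hq1 hw (by linarith)
  have hg2 : 0 < qGamma (q ^ w) ((w + s0) / w) := qGammaShift_pos hq0 hq1 hw (by linarith)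
  rw [Real.log_div hg1.ne' hg2.ne', log_qGamma_shift hq0 hq1 hw hx hs0,
    log_qGamma_shift hq0 hq1 hw hw hs0]
  have hwne : w ≠ 0 := hw.ne'
  field_simp
  ring

lemma mainSol_big_pos (hq0 : 0 < q) (hq1 : q < 1) (hw : 0 < w) {r s : ℕ} {a : Fin r → ℝ}
    {b : Fin s → ℝ} (ha : ∀ i, 0 ≤ a i) (hb : ∀ j, 0 ≤ b j) {x : ℝ} (hx : 0 < x) :
    0 < (∏ j, qGamma (q ^ w) ((x + a j) / w) / qGamma (q ^ w) ((w + a j) / w)) *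
      (∏ i, qGamma (q ^ w) ((w + b i) / w) / qGamma (q ^ w) ((x + b i) / w)) *
      qBracket q w ^ (((r : ℝ) - (s : ℝ)) * (x / w - 1)) := by
  have h1 : 0 < ∏ j, qGamma (q ^ w) ((x + a j) / w) / qGamma (q ^ w) ((w + a j) / w) :=
    Finset.prod_pos (fun j _ => div_pos
      (qGammaShift_pos hq0 hq1 hw (by linarith [ha j]))
      (qGammaShift_pos hq0 hq1 hw (by linarith [ha j])))
  have h2 : 0 < ∏ i, qGamma (q ^ w) ((w + b i) / w) / qGamma (q ^ w) ((x + b i) / w) :=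
    Finset.prod_pos (fun i _ => div_pos
      (qGammaShift_pos hq0 hq1 hw (by linarith [hb i]))
      (qGammaShift_pos hq0 hq1 hw (by linarith [hb i])))
  have h3 : 0 < qBracket q w ^ (((r : ℝ) - (s : ℝ)) * (x / w - 1)) :=
    Real.rpow_pos_of_pos (qBracket_pos hq0 hq1 hw) _
  positivity

lemma mainSol_pos (hq0 : 0 < q) (hq1 : q < 1) (hw : 0 < w) {r s : ℕ} {a : Fin r → ℝ}
    {b : Fin s → ℝ} (ha : ∀ i, 0 ≤ a i) (hb : ∀ j, 0 ≤ b j) (k : ℝ) {x : ℝ} (hx : 0 < x) :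
    0 < mainSol q w k r s a b x :=
  Real.rpow_pos_of_pos (mainSol_big_pos hq0 hq1 hw ha hb hx) k

lemma log_mainSol (hq0 : 0 < q) (hq1 : q < 1) (hw : 0 < w) {r s : ℕ} {a : Fin r → ℝ}
    {b : Fin s → ℝ} (ha : ∀ i, 0 ≤ a i) (hb : ∀ j, 0 ≤ b j) (k : ℝ) {x : ℝ} (hx : 0 < x) :
    Real.log (mainSol q w k r s a b x) =
      k * ((Phi (Real.log q) (BC q w a b) x + BETA q w r s * x)
        - (Phi (Real.log q) (BC q w a b) w + BETA q w r s * w)) := by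
  have hc := hlogq_neg hq0 hq1
  have h1 : 0 < ∏ j, qGamma (q ^ w) ((x + a j) / w) / qGamma (q ^ w) ((w + a j) / w) :=
    Finset.prod_pos (fun j _ => div_pos
      (qGammaShift_pos hq0 hq1 hw (by linarith [ha j]))
      (qGammaShift_pos hq0 hq1 hw (by linarith [ha j])))
  have h2 : 0 < ∏ i, qGamma (q ^ w) ((w + b i) / w) / qGamma (q ^ w) ((x + b i) / w) :=
    Finset.prod_pos (fun i _ => div_pos
      (qGammaShift_pos hq0 hq1 hw (by linarith [hb i]))
      (qGammaShift_pos hq0 hq1 hw (by linarith [hb i])))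
  have h3 : 0 < qBracket q w ^ (((r : ℝ) - (s : ℝ)) * (x / w - 1)) :=
    Real.rpow_pos_of_pos (qBracket_pos hq0 hq1 hw) _
  rw [mainSol, Real.log_rpow (mainSol_big_pos hq0 hq1 hw ha hb hx)]
  rw [Real.log_mul (by positivity) h3.ne', Real.log_mul h1.ne' h2.ne',
    Real.log_rpow (qBracket_pos hq0 hq1 hw)]
  rw [Real.log_prod (fun j _ => (div_pos
      (qGammaShift_pos (y := x + a j) hq0 hq1 hw (by linarith [ha j]))
      (qGammaShift_pos (y := w + a j) hq0 hq1 hw (by linarith [ha j]))).ne'),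
    Real.log_prod (fun i _ => (div_pos
      (qGammaShift_pos (y := w + b i) hq0 hq1 hw (by linarith [hb i]))
      (qGammaShift_pos (y := x + b i) hq0 hq1 hw (by linarith [hb i]))).ne')]
  have hsum1 : ∀ j : Fin r, Real.log (qGamma (q ^ w) ((x + a j) / w) /
      qGamma (q ^ w) ((w + a j) / w)) =
      Phi (Real.log q) (LA q w (a j)) w - Phi (Real.log q) (LA q w (a j)) x
        + (w - x) / w * Real.log (1 - q ^ w) :=
    fun j => ratio_log hq0 hq1 hw hx (ha j)
  have hsum2 : ∀ i : Fin s, Real.log (qGamma (q ^ w) ((w + b i) / w) /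
      qGamma (q ^ w) ((x + b i) / w)) =
      Phi (Real.log q) (LA q w (b i)) x - Phi (Real.log q) (LA q w (b i)) w
        - (w - x) / w * Real.log (1 - q ^ w) := by
    intro i
    have h := ratio_log hq0 hq1 hw hx (hb i)
    have hg1 : 0 < qGamma (q ^ w) ((x + b i) / w) :=
      qGammaShift_pos hq0 hq1 hw (by linarith [hb i])
    have hg2 : 0 < qGamma (q ^ w) ((w + b i) / w) :=
      qGammaShift_pos hq0 hq1 hw (by linarith [hb i])
    rw [show qGamma (q ^ w) ((w + b i) / w) / qGamma (q ^ w) ((x + b i) / w)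
        = (qGamma (q ^ w) ((x + b i) / w) / qGamma (q ^ w) ((w + b i) / w))⁻¹ by
          rw [inv_div],
      Real.log_inv, h]
    ring
  rw [Finset.sum_congr rfl (fun j _ => hsum1 j), Finset.sum_congr rfl (fun i _ => hsum2 i)]
  have hBC : ∀ y : ℝ, 0 < y → Phi (Real.log q) (BC q w a b) y =
      (∑ i, Phi (Real.log q) (LA q w (b i)) y) - (∑ j, Phi (Real.log q) (LA q w (a j)) y) := by
    intro y hy
    unfold BC
    rw [Phi_sub hc (Bd_finsum (fun i => Bd_LA hq0 hq1 hw (hb i)))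
      (Bd_finsum (fun j => Bd_LA hq0 hq1 hw (ha j))) hy,
      Phi_finsum hc (fun i => Bd_LA hq0 hq1 hw (hb i)) hy,
      Phi_finsum hc (fun j => Bd_LA hq0 hq1 hw (ha j)) hy]
  rw [hBC x hx, hBC w hw]
  simp only [Finset.sum_add_distrib, Finset.sum_sub_distrib, Finset.sum_const,
    Finset.card_univ, Fintype.card_fin, nsmul_eq_mul]
  unfold BETA
  have hwne : w ≠ 0 := hw.ne'
  rw [mul_eq_mul_left_iff]
  left
  field_simp
  ring

/-! ### Stage 5: the difference identity -/

lemma beta_w (hq0 : 0 < q) (hq1 : q < 1) (hw : 0 < w) (r s : ℕ) :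
    BETA q w r s * w = -(((r : ℝ) - s) * Real.log (1 - q)) := by
  have h1 : q ^ w < 1 := hp1 hq0 hq1 hw
  have h2 : (0:ℝ) < 1 - q ^ w := by linarith
  have h3 : (0:ℝ) < 1 - q := by linarith
  unfold BETA qBracket
  rw [Real.log_div h2.ne' h3.ne']
  field_simp
  ring

lemma LA_mul_eq (hq0 : 0 < q) (hq1 : q < 1) (hw : 0 < w) (s0 : ℝ) (m : ℕ) :
    LA q w s0 m * ((q ^ w) ^ (m + 1) - 1) = -LE q s0 m := by
  have hPm : ((q ^ w : ℝ)) ^ (m + 1) < 1 :=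
    pow_lt_one₀ (hp0 (w := w) hq0).le (hp1 hq0 hq1 hw) (Nat.succ_ne_zero m)
  have hPne : (1:ℝ) - (q ^ w) ^ (m + 1) ≠ 0 := by linarith
  have hm1 : ((m:ℝ) + 1) ≠ 0 := by positivity
  unfold LA LE
  field_simp
  ring

lemma BC_mul_eq (hq0 : 0 < q) (hq1 : q < 1) (hw : 0 < w) {r s : ℕ} (a : Fin r → ℝ)
    (b : Fin s → ℝ) (m : ℕ) :
    BC q w a b m * (q ^ w) ^ (m + 1) - BC q w a b m =
      (∑ j, LE q (a j) m) - (∑ i, LE q (b i) m) := by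
  have key : ∀ s0 : ℝ, LA q w s0 m * ((q ^ w) ^ (m + 1) - 1) = -LE q s0 m :=
    fun s0 => LA_mul_eq hq0 hq1 hw s0 m
  have h : BC q w a b m * (q ^ w) ^ (m + 1) - BC q w a b m
      = BC q w a b m * ((q ^ w) ^ (m + 1) - 1) := by ring
  rw [h]
  unfold BC
  rw [sub_mul, Finset.sum_mul, Finset.sum_mul]
  rw [Finset.sum_congr rfl (fun i _ => key (b i)), Finset.sum_congr rfl (fun j _ => key (a j))]
  rw [Finset.sum_neg_distrib, Finset.sum_neg_distrib]
  ring

lemma log_bracket_ratio (hq0 : 0 < q) (hq1 : q < 1) (hw : 0 < w) {r s : ℕ}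
    {a : Fin r → ℝ} {b : Fin s → ℝ} (ha : ∀ i, 0 ≤ a i) (hb : ∀ j, 0 ≤ b j)
    {x : ℝ} (hx : 0 < x) :
    Real.log ((∏ i, qBracket q (x + a i)) / ∏ j, qBracket q (x + b j)) =
      (Phi (Real.log q) (BC q w a b) (x + w) - Phi (Real.log q) (BC q w a b) x)
        + BETA q w r s * w := by
  have hc := hlogq_neg hq0 hq1
  have hprod1 : 0 < ∏ i, qBracket q (x + a i) :=
    Finset.prod_pos (fun i _ => qBracket_pos hq0 hq1 (by linarith [ha i]))
  have hprod2 : 0 < ∏ j, qBracket q (x + b j) :=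
    Finset.prod_pos (fun j _ => qBracket_pos hq0 hq1 (by linarith [hb j]))
  -- RHS: the Phi difference equals Phi of the (LE-sum) coefficients
  have hshift : Phi (Real.log q) (BC q w a b) (x + w) - Phi (Real.log q) (BC q w a b) x =
      Phi (Real.log q) (fun m => (∑ j, LE q (a j) m) - (∑ i, LE q (b i) m)) x := by
    rw [Phi_shift hq0 x,
      ← Phi_sub hc (Bd_mul_qwpow hq0 hq1 hw (Bd_BC hq0 hq1 hw ha hb))
        (Bd_BC hq0 hq1 hw ha hb) hx]
    unfold Phi
    congr 1
    funext m
    dsimp only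
    rw [BC_mul_eq hq0 hq1 hw a b m]
  rw [show (Phi (Real.log q) (BC q w a b) (x + w) - Phi (Real.log q) (BC q w a b) x)
      + BETA q w r s * w
      = (Phi (Real.log q) (BC q w a b) (x + w) - Phi (Real.log q) (BC q w a b) x)
      + BETA q w r s * w from rfl, hshift, beta_w hq0 hq1 hw r s]
  -- LHS
  have h3 : (0:ℝ) < 1 - q := by linarith
  have hlb : ∀ s0 : ℝ, 0 ≤ s0 → Real.log (qBracket q (x + s0)) =
      Phi (Real.log q) (LE q s0) x - Real.log (1 - q) := by
    intro s0 hs0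
    have ht1 : q ^ (x + s0) < 1 := Real.rpow_lt_one hq0.le hq1 (by linarith)
    have h4 : (0:ℝ) < 1 - q ^ (x + s0) := by linarith
    unfold qBracket
    rw [Real.log_div h4.ne' h3.ne', logOneSub hq0 hq1 hx hs0]
  rw [Real.log_div hprod1.ne' hprod2.ne',
    Real.log_prod (fun i _ => (qBracket_pos hq0 hq1 (by linarith [ha i] : 0 < x + a i)).ne'),
    Real.log_prod (fun j _ => (qBracket_pos hq0 hq1 (by linarith [hb j] : 0 < x + b j)).ne'),
    Finset.sum_congr rfl (fun i _ => hlb (a i) (ha i)),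
    Finset.sum_congr rfl (fun j _ => hlb (b j) (hb j))]
  rw [Phi_sub hc (Bd_finsum (fun j => Bd_LE hq0 hq1 (ha j)))
      (Bd_finsum (fun i => Bd_LE hq0 hq1 (hb i))) hx,
    Phi_finsum hc (fun j => Bd_LE hq0 hq1 (ha j)) hx,
    Phi_finsum hc (fun i => Bd_LE hq0 hq1 (hb i)) hx]
  simp only [Finset.sum_sub_distrib, Finset.sum_const, Finset.card_univ, Fintype.card_fin,
    nsmul_eq_mul]
  ring

/-! ### Stage 6: calculus utilities -/

lemma itDW_eq (f : ℝ → ℝ) (N : ℕ) {x : ℝ} (hx : x ∈ Ioi (0:ℝ)) :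
    iteratedDerivWithin N f (Ioi 0) x = iteratedDeriv N f x := by
  rw [iteratedDerivWithin_eq_iteratedFDerivWithin, iteratedDeriv_eq_iteratedFDeriv,
    iteratedFDerivWithin_of_isOpen N isOpen_Ioi hx]

lemma iteratedDeriv_periodic_of_periodic {w : ℝ} (h : ℝ → ℝ)
    (hper : ∀ x > (0:ℝ), h (x + w) = h x) (hw : 0 < w) (N : ℕ) :
    ∀ x > (0:ℝ), iteratedDeriv N h (x + w) = iteratedDeriv N h x := by
  intro x hx
  have h1 : iteratedDeriv N h (x + w) = iteratedDeriv N (fun z => h (z + w)) x := by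
    rw [iteratedDeriv_comp_add_const]
  rw [h1]
  refine Filter.EventuallyEq.iteratedDeriv_eq N ?_
  filter_upwards [isOpen_Ioi.mem_nhds (show x ∈ Ioi (0:ℝ) from hx)] with y hy
  exact hper y hy

lemma periodic_iterate {w : ℝ} (hw : 0 < w) (F : ℝ → ℝ)
    (hper : ∀ x > (0:ℝ), F (x + w) = F x) :
    ∀ (m : ℕ) (z : ℝ), 0 < z → F (z + m * w) = F z := by
  intro m
  induction m with
  | zero => intro z hz; simp
  | succ m IH =>
    intro z hz
    have h1 : z + (m + 1 : ℕ) * w = (z + m * w) + w := by push_cast; ring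
    rw [h1, hper (z + m * w) (by positivity), IH z hz]

lemma Bd_const_mul {A : ℕ → ℝ} {C : ℝ} {d : ℕ} (hA : Bd A C d) (k : ℝ) :
    Bd (fun m => k * A m) (|k| * C) d := by
  intro m
  dsimp only
  rw [abs_mul]
  calc |k| * |A m| ≤ |k| * (C * (m + 1 : ℝ) ^ d) :=
        mul_le_mul_of_nonneg_left (hA m) (abs_nonneg k)
    _ = |k| * C * (m + 1 : ℝ) ^ d := by ring

lemma Phi_const_mul {c : ℝ} (A : ℕ → ℝ) (k x : ℝ) :
    k * Phi c A x = Phi c (fun m => k * A m) x := by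
  unfold Phi
  rw [← tsum_mul_left]
  congr 1
  funext m
  ring

/-- iterated derivative of `Phi + affine` -/
lemma iteratedDeriv_Phi_affine {c : ℝ} (hc : c < 0) {A : ℕ → ℝ} {C : ℝ} {d : ℕ}
    (hA : Bd A C d) (u v : ℝ) (N : ℕ) :
    ∀ x > (0:ℝ), iteratedDeriv (N + 1) (fun y => Phi c A y + (u * y + v)) x =
      Phi c (fun m => A m * ((m + 1) * c) ^ (N + 1)) x + (if N = 0 then u else 0) := by
  induction N with
  | zero =>
    intro x hx
    have hder : HasDerivAt (fun y => Phi c A y + (u * y + v))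
        (Phi c (fun m => A m * ((m + 1) * c)) x + u) x := by
      have h2 : HasDerivAt (fun y : ℝ => u * y + v) u x := by
        simpa using ((hasDerivAt_id x).const_mul u).add_const v
      exact (hasDerivAt_Phi hc hA hx).add h2
    rw [iteratedDeriv_one, hder.deriv]
    simp only [if_pos rfl]
    congr 1
    unfold Phi
    congr 1
    funext m
    dsimp only
    rw [pow_one]
  | succ N IH =>
    intro x hx
    rw [iteratedDeriv_succ]
    have hev : iteratedDeriv (N + 1) (fun y => Phi c A y + (u * y + v)) =ᶠ[𝓝 x]
        (fun y => Phi c (fun m => A m * ((m + 1) * c) ^ (N + 1)) y + (if N = 0 then u else 0)) := by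
      filter_upwards [isOpen_Ioi.mem_nhds (show x ∈ Ioi (0:ℝ) from hx)] with y hy
      exact IH y hy
    rw [hev.deriv_eq]
    have hder : HasDerivAt (fun y =>
        Phi c (fun m => A m * ((m + 1) * c) ^ (N + 1)) y + (if N = 0 then u else 0))
        (Phi c (fun m => (A m * ((m + 1) * c) ^ (N + 1)) * ((m + 1) * c)) x) x := by
      exact (hasDerivAt_Phi hc (hA.mulWeight c (N + 1)) hx).add_const _
    rw [hder.deriv]
    simp only [Nat.succ_ne_zero, if_false, add_zero]
    unfold Phi
    congr 1
    funext m
    dsimp only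
    rw [pow_succ]
    ring

lemma contDiffOn_Phi_affine {c : ℝ} (hc : c < 0) {A : ℕ → ℝ} {C : ℝ} {d : ℕ}
    (hA : Bd A C d) (u v : ℝ) (N : ℕ) :
    ContDiffOn ℝ N (fun y => Phi c A y + (u * y + v)) (Ioi 0) := by
  refine (contDiffOn_Phi hc hA N).add ?_
  exact ((contDiff_const.mul contDiff_id).add contDiff_const).contDiffOn

/-! ### Stage 7: the reference function -/

/-- series form of `log mainSol` -/
noncomputable def GsF (q w k : ℝ) {r s : ℕ} (a : Fin r → ℝ) (b : Fin s → ℝ) : ℝ → ℝ :=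
  fun y => Phi (Real.log q) (fun m => k * BC q w a b m) y +
    ((k * BETA q w r s) * y +
      -(k * (Phi (Real.log q) (BC q w a b) w + BETA q w r s * w)))

variable {r s : ℕ} {a : Fin r → ℝ} {b : Fin s → ℝ} {k : ℝ}

lemma GsF_eq_log_mainSol (hq0 : 0 < q) (hq1 : q < 1) (hw : 0 < w)
    (ha : ∀ i, 0 ≤ a i) (hb : ∀ j, 0 ≤ b j) (k : ℝ) {x : ℝ} (hx : 0 < x) :
    Real.log (mainSol q w k r s a b x) = GsF q w k a b x := by
  rw [log_mainSol hq0 hq1 hw ha hb k hx]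
  unfold GsF
  rw [← Phi_const_mul]
  ring

lemma GsF_w (hq0 : 0 < q) (hq1 : q < 1) (hw : 0 < w) :
    GsF q w k a b w = 0 := by
  unfold GsF
  rw [← Phi_const_mul]
  ring

lemma GsF_step (hq0 : 0 < q) (hq1 : q < 1) (hw : 0 < w)
    (ha : ∀ i, 0 ≤ a i) (hb : ∀ j, 0 ≤ b j) {x : ℝ} (hx : 0 < x) :
    GsF q w k a b (x + w) =
      k * Real.log ((∏ i, qBracket q (x + a i)) / ∏ j, qBracket q (x + b j)) +
        GsF q w k a b x := by
  unfold GsF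
  rw [log_bracket_ratio hq0 hq1 hw ha hb hx]
  rw [← Phi_const_mul, ← Phi_const_mul]
  ring

lemma GsF_smooth (hq0 : 0 < q) (hq1 : q < 1) (hw : 0 < w)
    (ha : ∀ i, 0 ≤ a i) (hb : ∀ j, 0 ≤ b j) (N : ℕ) :
    ContDiffOn ℝ N (GsF q w k a b) (Ioi 0) :=
  contDiffOn_Phi_affine (hlogq_neg hq0 hq1) (Bd_const_mul (Bd_BC hq0 hq1 hw ha hb) k) _ _ N

lemma GsF_iteratedDeriv (hq0 : 0 < q) (hq1 : q < 1) (hw : 0 < w)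
    (ha : ∀ i, 0 ≤ a i) (hb : ∀ j, 0 ≤ b j) (N : ℕ) {x : ℝ} (hx : 0 < x) :
    iteratedDeriv (N + 1) (GsF q w k a b) x =
      Phi (Real.log q) (fun m => (k * BC q w a b m) * ((m + 1) * Real.log q) ^ (N + 1)) x +
        (if N = 0 then k * BETA q w r s else 0) :=
  iteratedDeriv_Phi_affine (hlogq_neg hq0 hq1) (Bd_const_mul (Bd_BC hq0 hq1 hw ha hb) k)
    _ _ N x hx

lemma GsF_tendsto (hq0 : 0 < q) (hq1 : q < 1) (hw : 0 < w)
    (ha : ∀ i, 0 ≤ a i) (hb : ∀ j, 0 ≤ b j) (N : ℕ) :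
    Tendsto (Phi (Real.log q)
      (fun m => (k * BC q w a b m) * ((m + 1) * Real.log q) ^ (N + 1))) atTop (𝓝 0) :=
  tendsto_Phi (hlogq_neg hq0 hq1)
    ((Bd_const_mul (Bd_BC hq0 hq1 hw ha hb) k).mulWeight (Real.log q) (N + 1))

end Stage4

end Stmt10Aux

open Stmt10Aux Filter Topology

theorem stmt10 (q w k : ℝ) (hq0 : 0 < q) (hq1 : q < 1) (hw : 0 < w) (r s : ℕ)
    (a : Fin r → ℝ) (b : Fin s → ℝ) (ha : ∀ i, 0 ≤ a i) (hb : ∀ j, 0 ≤ b j)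
    (f : ℝ → ℝ) (hpos : ∀ x > 0, 0 < f x)
    (hfe : ∀ x > 0, f (x + w) =
      ((∏ i, qBracket q (x + a i)) / ∏ j, qBracket q (x + b j)) ^ k * f x)
    (hfw : f w = 1)
    (n : ℕ) (hn : 1 ≤ n) (L : ℝ) (hL : 0 ≤ L)
    (hsmooth : ContDiffOn ℝ n (fun x => Real.log (f x)) (Ioi 0))
    (hmono : MonotoneOn (iteratedDerivWithin n (fun x => Real.log (f x)) (Ioi 0)) (Ioi L) ∨
             AntitoneOn (iteratedDerivWithin n (fun x => Real.log (f x)) (Ioi 0)) (Ioi L)) :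
    ∀ x > 0, f x = mainSol q w k r s a b x := by
  have hc : Real.log q < 0 := hlogq_neg hq0 hq1
  set G : ℝ → ℝ := GsF q w k a b with hGdef
  set h : ℝ → ℝ := fun y => Real.log (f y) - G y with hhdef
  -- positivity of the bracket ratio
  have hratio : ∀ x > (0:ℝ), 0 < (∏ i, qBracket q (x + a i)) / ∏ j, qBracket q (x + b j) := by
    intro x hx
    exact div_pos
      (Finset.prod_pos (fun i _ => qBracket_pos hq0 hq1 (by linarith [ha i])))
      (Finset.prod_pos (fun j _ => qBracket_pos hq0 hq1 (by linarith [hb j])))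
  -- periodicity of h
  have hper : ∀ x > (0:ℝ), h (x + w) = h x := by
    intro x hx
    have h1 := hfe x hx
    have h2 : Real.log (f (x + w)) =
        k * Real.log ((∏ i, qBracket q (x + a i)) / ∏ j, qBracket q (x + b j))
          + Real.log (f x) := by
      rw [h1, Real.log_mul (Real.rpow_pos_of_pos (hratio x hx) k).ne' (hpos x hx).ne',
        Real.log_rpow (hratio x hx)]
    simp only [hhdef]
    rw [h2, hGdef, GsF_step hq0 hq1 hw ha hb hx]
    ring
  -- smoothness of h
  have hsmG : ContDiffOn ℝ n G (Ioi 0) := GsF_smooth hq0 hq1 hw ha hb n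
  have hsm_h : ContDiffOn ℝ n h (Ioi 0) := hsmooth.sub hsmG
  -- write n = N + 1
  obtain ⟨N, rfl⟩ : ∃ N, n = N + 1 := ⟨n - 1, by omega⟩
  set γ : ℝ := if N = 0 then k * BETA q w r s else 0 with hγdef
  set AN : ℕ → ℝ :=
    fun m => (k * BC q w a b m) * ((m + 1) * Real.log q) ^ (N + 1) with hANdef
  set gN := iteratedDerivWithin (N + 1) (fun x => Real.log (f x)) (Ioi 0) with hgNdef
  set ψ := fun j : ℕ => iteratedDeriv j h with hψdef
  -- decomposition of gN
  have hfun_eq : (fun y => Real.log (f y)) = h + G := by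
    funext y
    simp only [hhdef, Pi.add_apply]
    ring
  have hgN : ∀ z > (0:ℝ), gN z = ψ (N + 1) z + (Phi (Real.log q) AN z + γ) := by
    intro z hz
    have hz' : z ∈ Ioi (0:ℝ) := hz
    rw [hgNdef, hfun_eq,
      iteratedDerivWithin_add (hx := hz') (h := isOpen_Ioi.uniqueDiffOn) (hsm_h z hz') (hsmG z hz'),
      itDW_eq h (N + 1) hz', itDW_eq G (N + 1) hz', hGdef,
      GsF_iteratedDeriv hq0 hq1 hw ha hb N hz]
  -- periodicity of iterated derivatives of h
  have hψper : ∀ j : ℕ, ∀ x > (0:ℝ), ψ j (x + w) = ψ j x := by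
    intro j
    exact iteratedDeriv_periodic_of_periodic h hper hw j
  -- the limit of gN along arithmetic progressions
  have htend : ∀ z > (0:ℝ), Tendsto (fun m : ℕ => gN (z + m * w)) atTop (𝓝 (ψ (N + 1) z + γ)) := by
    intro z hz
    have harith : Tendsto (fun m : ℕ => z + m * w) atTop atTop := by
      apply tendsto_atTop_add_const_left
      exact tendsto_natCast_atTop_atTop.atTop_mul_const hw
    have h0 : ∀ m : ℕ, gN (z + m * w) = ψ (N + 1) z + (Phi (Real.log q) AN (z + m * w) + γ) := by
      intro m
      rw [hgN (z + m * w) (by positivity),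
        periodic_iterate hw (ψ (N + 1)) (hψper (N + 1)) m z hz]
    simp only [h0]
    have hPhi : Tendsto (fun m : ℕ => Phi (Real.log q) AN (z + m * w)) atTop (𝓝 0) :=
      (GsF_tendsto hq0 hq1 hw ha hb N (k := k)).comp harith
    have := ((hPhi.add_const γ).const_add (ψ (N + 1) z))
    simpa using this
  -- step 1: ψ (N+1) is constant on Ioi L
  have hconst_top : ∀ x ∈ Ioi L, ∀ y ∈ Ioi L, ψ (N + 1) x = ψ (N + 1) y := by
    have key : ∀ (x y : ℝ), x ∈ Ioi L → y ∈ Ioi L →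
        (MonotoneOn gN (Ioi L) → ψ (N + 1) x ≤ ψ (N + 1) y) ∧
        (AntitoneOn gN (Ioi L) → ψ (N + 1) y ≤ ψ (N + 1) x) := by
      intro x y hxL hyL
      have hx0 : 0 < x := lt_of_le_of_lt hL hxL
      have hy0 : 0 < y := lt_of_le_of_lt hL hyL
      obtain ⟨K, hK⟩ := exists_nat_ge ((x - y) / w)
      have hxyK : x ≤ y + K * w := by
        have := (div_le_iff₀ hw).mp hK
        linarith
      have hmem1 : ∀ m : ℕ, x + m * w ∈ Ioi L := by
        intro m
        have : (0:ℝ) ≤ m * w := by positivity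
        simp only [mem_Ioi] at hxL ⊢
        linarith
      have hmem2 : ∀ m : ℕ, y + (m + K) * w ∈ Ioi L := by
        intro m
        have : (0:ℝ) ≤ (m + K : ℕ) * w := by positivity
        simp only [mem_Ioi] at hyL ⊢
        push_cast
        push_cast at this
        linarith
      have hle_arg : ∀ m : ℕ, x + m * w ≤ y + ((m + K : ℕ) : ℝ) * w := by
        intro m
        push_cast
        nlinarith [hw.le]
      have ht1 : Tendsto (fun m : ℕ => gN (x + m * w)) atTop (𝓝 (ψ (N + 1) x + γ)) :=
        htend x hx0
      have ht2 : Tendsto (fun m : ℕ => gN (y + ((m + K : ℕ) : ℝ) * w)) atTop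
          (𝓝 (ψ (N + 1) y + γ)) := by
        have := (htend y hy0).comp (tendsto_add_atTop_nat K)
        exact this
      constructor
      · intro hm
        have hle : ∀ m : ℕ, gN (x + m * w) ≤ gN (y + ((m + K : ℕ) : ℝ) * w) := by
          intro m
          exact hm (hmem1 m) (by exact_mod_cast hmem2 m) (hle_arg m)
        have := le_of_tendsto_of_tendsto' ht1 ht2 hle
        linarith
      · intro hm
        have hle : ∀ m : ℕ, gN (y + ((m + K : ℕ) : ℝ) * w) ≤ gN (x + m * w) := by
          intro m
          exact hm (hmem1 m) (by exact_mod_cast hmem2 m) (hle_arg m)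
        have := le_of_tendsto_of_tendsto' ht2 ht1 hle
        linarith
    intro x hxL y hyL
    rcases hmono with hm | hm
    · exact le_antisymm ((key x y hxL hyL).1 hm) ((key y x hyL hxL).1 hm)
    · exact le_antisymm ((key y x hyL hxL).2 hm) ((key x y hxL hyL).2 hm)
  -- step 2: descend
  have hdesc : ∀ j : ℕ, j ≤ N + 1 → ∀ x ∈ Ioi L, ∀ y ∈ Ioi L,
      ψ (N + 1 - j) x = ψ (N + 1 - j) y := by
    intro j
    induction j with
    | zero => intro _ x hx y hy; simpa using hconst_top x hx y hy
    | succ j IH =>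
      intro hj x hxL y hyL
      set i := N + 1 - (j + 1) with hidef
      have hi1 : N + 1 - j = i + 1 := by omega
      have hIH : ∀ x ∈ Ioi L, ∀ y ∈ Ioi L, ψ (i + 1) x = ψ (i + 1) y := by
        intro x hx y hy
        have := IH (by omega) x hx y hy
        rwa [hi1] at this
      -- differentiability
      have hasD : ∀ z > (0:ℝ), HasDerivAt (ψ i) (ψ (i + 1) z) z := by
        intro z hz
        have hdiffOn : DifferentiableOn ℝ (iteratedDerivWithin i h (Ioi 0)) (Ioi 0) := by
          apply hsm_h.differentiableOn_iteratedDerivWithin _ isOpen_Ioi.uniqueDiffOn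
          exact_mod_cast Nat.lt_of_lt_of_le (by omega : i < N + 1) le_rfl
        have hev : iteratedDerivWithin i h (Ioi 0) =ᶠ[𝓝 z] iteratedDeriv i h := by
          filter_upwards [isOpen_Ioi.mem_nhds (show z ∈ Ioi (0:ℝ) from hz)] with y hy
          exact itDW_eq h i hy
        have hdA : DifferentiableAt ℝ (iteratedDeriv i h) z :=
          hev.differentiableAt_iff.mp
            ((hdiffOn z hz).differentiableAt (isOpen_Ioi.mem_nhds hz))
        have := hdA.hasDerivAt
        rw [hψdef]
        simp only
        rw [iteratedDeriv_succ]
        exact hdA.hasDerivAt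
      -- MVT
      have hslope : ∀ x1 x2 : ℝ, L < x1 → x1 < x2 →
          ψ i x2 - ψ i x1 = ψ (i + 1) (L + 1) * (x2 - x1) := by
        intro x1 x2 h1 h2
        have hx10 : 0 < x1 := lt_of_le_of_lt hL h1
        obtain ⟨ξ, hξ, hξeq⟩ := exists_hasDerivAt_eq_slope (ψ i) (ψ (i + 1)) h2
          (fun z hz => by
            have hz0 : 0 < z := lt_of_lt_of_le hx10 hz.1
            exact (hasD z hz0).continuousAt.continuousWithinAt)
          (fun z hz => hasD z (lt_trans hx10 hz.1))
        have hξL : ξ ∈ Ioi L := lt_trans h1 hξ.1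
        have hval : ψ (i + 1) ξ = ψ (i + 1) (L + 1) :=
          hIH ξ hξL (L + 1) (by simp only [mem_Ioi]; linarith)
        rw [hval] at hξeq
        have hne : x2 - x1 ≠ 0 := by linarith
        field_simp at hξeq
        linarith [hξeq]
      have hK0 : ψ (i + 1) (L + 1) = 0 := by
        have h1 := hslope (L + 1) (L + 1 + w) (by linarith) (by linarith)
        have h2 : ψ i (L + 1 + w) = ψ i (L + 1) := hψper i (L + 1) (by linarith)
        have hwne : w ≠ 0 := hw.ne'
        have : ψ (i + 1) (L + 1) * w = 0 := by
          have : L + 1 + w - (L + 1) = w := by ring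
          rw [this] at h1
          linarith [h1, h2]
        exact (mul_eq_zero.mp this).resolve_right hwne
      have hgoal : ∀ x1 x2 : ℝ, x1 ∈ Ioi L → x2 ∈ Ioi L → ψ i x1 = ψ i x2 := by
        intro x1 x2 hx1 hx2
        rcases lt_trichotomy x1 x2 with hlt | heq | hgt
        · have := hslope x1 x2 hx1 hlt
          rw [hK0] at this
          linarith
        · rw [heq]
        · have := hslope x2 x1 hx2 hgt
          rw [hK0] at this
          linarith
      exact hgoal x y hxL hyL
  -- step 3: h is constant on Ioi L, hence ≡ 0
  have hhconst : ∀ x ∈ Ioi L, ∀ y ∈ Ioi L, h x = h y := by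
    have := hdesc (N + 1) le_rfl
    simpa [hψdef, iteratedDeriv_zero] using this
  have hGw : G w = 0 := GsF_w hq0 hq1 hw
  have hhw : h w = 0 := by
    simp only [hhdef]
    rw [hfw, Real.log_one, hGw]
    ring
  have hzero : ∀ z > (0:ℝ), h z = 0 := by
    intro z hz
    obtain ⟨m1, hm1⟩ := exists_nat_gt ((L - z) / w)
    obtain ⟨m2, hm2⟩ := exists_nat_gt ((L - w) / w)
    have hz1 : z + m1 * w ∈ Ioi L := by
      have := (div_lt_iff₀ hw).mp hm1
      simp only [mem_Ioi]
      linarith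
    have hz2 : w + m2 * w ∈ Ioi L := by
      have := (div_lt_iff₀ hw).mp hm2
      simp only [mem_Ioi]
      linarith
    calc h z = h (z + m1 * w) := (periodic_iterate hw h hper m1 z hz).symm
      _ = h (w + m2 * w) := hhconst _ hz1 _ hz2
      _ = h w := periodic_iterate hw h hper m2 w hw
      _ = 0 := hhw
  -- conclusion
  intro x hx
  have h1 : Real.log (f x) = Real.log (mainSol q w k r s a b x) := by
    have h2 := hzero x hx
    simp only [hhdef] at h2
    rw [hGdef] at h2
    rw [GsF_eq_log_mainSol hq0 hq1 hw ha hb k hx]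
    linarith
  calc f x = Real.exp (Real.log (f x)) := (Real.exp_log (hpos x hx)).symm
    _ = Real.exp (Real.log (mainSol q w k r s a b x)) := by rw [h1]
    _ = mainSol q w k r s a b x := Real.exp_log (mainSol_pos hq0 hq1 hw ha hb k hx)
end

section
/- For 0<q<1, the function G_q(x) := Γ_{q²}(x/2) / ( √([2]_q) · Γ_{q²}((x+1)/2) ) is strictly decreasing and logarithmically convex on (0,∞). -/
open Real Set

section Poch
variable {a c : ℝ}

lemma summable_logPoch (ha0 : 0 ≤ a) (ha1 : a < 1) (hc0 : 0 ≤ c) (hc1 : c < 1) :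
    Summable fun k : ℕ => Real.log (1 - a * c ^ k) := by
  rw [← summable_neg_iff]
  have hu : ∀ k : ℕ, 0 ≤ a * c ^ k ∧ a * c ^ k ≤ a := fun k =>
    ⟨mul_nonneg ha0 (pow_nonneg hc0 k), by
      nlinarith [pow_le_one₀ hc0 hc1.le (n := k), pow_nonneg hc0 k]⟩
  have hpos : ∀ k : ℕ, 0 < 1 - a * c ^ k := fun k => by nlinarith [(hu k).2]
  refine Summable.of_nonneg_of_le (g := fun k => -Real.log (1 - a * c ^ k))
    (f := fun k => (1 - a)⁻¹ * a * c ^ k) (fun k => ?_) (fun k => ?_) ?_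
  · simpa using Real.log_nonpos (by linarith [(hu k).2]) (by nlinarith [(hu k).1])
  · have h1 : -Real.log (1 - a * c ^ k) = Real.log (1 - a * c ^ k)⁻¹ := by
      rw [Real.log_inv]
    rw [h1]
    have h2 := Real.log_le_sub_one_of_pos (inv_pos.2 (hpos k))
    have hne : (1 - a * c ^ k) ≠ 0 := (hpos k).ne'
    have h3 : (1 - a * c ^ k)⁻¹ - 1 = (a * c ^ k) * (1 - a * c ^ k)⁻¹ := by
      field_simp
      ring
    have h4 : (1 - a * c ^ k)⁻¹ ≤ (1 - a)⁻¹ := by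
      apply inv_anti₀ (by linarith) (by nlinarith [(hu k).2])
    calc Real.log (1 - a * c ^ k)⁻¹ ≤ (1 - a * c ^ k)⁻¹ - 1 := h2
      _ = (a * c ^ k) * (1 - a * c ^ k)⁻¹ := h3
      _ ≤ (a * c ^ k) * (1 - a)⁻¹ := by
          exact mul_le_mul_of_nonneg_left h4 (hu k).1
      _ = (1 - a)⁻¹ * a * c ^ k := by ring
  · exact ((summable_geometric_of_lt_one hc0 hc1).mul_left _)

lemma hasProd_poch (ha0 : 0 ≤ a) (ha1 : a < 1) (hc0 : 0 ≤ c) (hc1 : c < 1) :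
    HasProd (fun k : ℕ => 1 - a * c ^ k)
      (Real.exp (∑' k : ℕ, Real.log (1 - a * c ^ k))) := by
  have hpos : ∀ k : ℕ, 0 < 1 - a * c ^ k := fun k => by
    nlinarith [mul_nonneg ha0 (pow_nonneg hc0 k), pow_le_one₀ hc0 hc1.le (n := k),
      pow_nonneg hc0 k]
  have hs := (summable_logPoch ha0 ha1 hc0 hc1).hasSum
  have ht := (Real.continuous_exp.tendsto _).comp hs
  refine Filter.Tendsto.congr (fun s => ?_) ht
  rw [Function.comp_apply, Real.exp_sum]
  exact Finset.prod_congr rfl fun i _ => Real.exp_log (hpos i)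

lemma qPochInf_eq (ha0 : 0 ≤ a) (ha1 : a < 1) (hc0 : 0 ≤ c) (hc1 : c < 1) :
    qPochInf a c = Real.exp (∑' k : ℕ, Real.log (1 - a * c ^ k)) :=
  (hasProd_poch ha0 ha1 hc0 hc1).tprod_eq

lemma qPochInf_pos (ha0 : 0 ≤ a) (ha1 : a < 1) (hc0 : 0 ≤ c) (hc1 : c < 1) :
    0 < qPochInf a c := by
  rw [qPochInf_eq ha0 ha1 hc0 hc1]; exact Real.exp_pos _

end Poch

/-- `G_q(x) = Γ_{q²}(x/2) / (√([2]_q) Γ_{q²}((x+1)/2))`, where `[2]_q = 1 + q`. -/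
noncomputable def qG (q x : ℝ) : ℝ :=
  qGamma (q ^ 2) (x / 2) / (Real.sqrt (1 + q) * qGamma (q ^ 2) ((x + 1) / 2))

noncomputable def pterm (q x : ℝ) (p : ℕ × ℕ) : ℝ :=
  (q ^ x * q ^ (2 * p.1)) ^ (p.2 + 1) * (1 - q ^ (p.2 + 1)) / ((p.2 : ℝ) + 1)

section Main
variable {q x y : ℝ}

lemma rpow_lt_one' (hq0 : 0 < q) (hq1 : q < 1) (hx : 0 < x) : q ^ x < 1 :=
  Real.rpow_lt_one hq0.le hq1 hx

lemma hasSum_inner (hq0 : 0 < q) (hq1 : q < 1) (hx : 0 < x) (k : ℕ) :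
    HasSum (fun n : ℕ => pterm q x (k, n))
      (Real.log (1 - q ^ (x + 1) * (q ^ 2) ^ k) - Real.log (1 - q ^ x * (q ^ 2) ^ k)) := by
  set u : ℝ := q ^ x * (q ^ 2) ^ k with hu_def
  have hqx0 : (0:ℝ) < q ^ x := Real.rpow_pos_of_pos hq0 x
  have hqx1 : q ^ x < 1 := rpow_lt_one' hq0 hq1 hx
  have hu0 : 0 < u := mul_pos hqx0 (pow_pos (pow_pos hq0 2) k)
  have hu1 : u < 1 := by
    have : (q ^ 2 : ℝ) ^ k ≤ 1 := pow_le_one₀ (by positivity) (by nlinarith)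
    nlinarith
  have h1 : HasSum (fun n : ℕ => u ^ (n + 1) / (n + 1)) (-Real.log (1 - u)) :=
    hasSum_pow_div_log_of_abs_lt_one (by rw [abs_of_pos hu0]; exact hu1)
  have huq0 : 0 < u * q := mul_pos hu0 hq0
  have huq1 : u * q < 1 := by nlinarith
  have h2 : HasSum (fun n : ℕ => (u * q) ^ (n + 1) / (n + 1)) (-Real.log (1 - u * q)) :=
    hasSum_pow_div_log_of_abs_lt_one (by rw [abs_of_pos huq0]; exact huq1)
  have h3 := h1.sub h2
  have hxq : q ^ (x + 1) * (q ^ 2) ^ k = u * q := by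
    rw [Real.rpow_add hq0, Real.rpow_one]; ring
  have h4 : (fun n : ℕ => pterm q x (k, n))
      = fun n : ℕ => u ^ (n + 1) / (n + 1) - (u * q) ^ (n + 1) / (n + 1) := by
    funext n
    rw [pterm, mul_pow]
    have hqk : (q ^ 2 : ℝ) ^ k = q ^ (2 * k) := by rw [pow_mul]
    rw [hu_def, hqk]
    ring
  have h5 : Real.log (1 - u * q) - Real.log (1 - u)
      = -Real.log (1 - u) - -Real.log (1 - u * q) := by ring
  rw [hxq, h5, h4]
  exact h3

set_option maxHeartbeats 1000000 in
lemma summable_pterm (hq0 : 0 < q) (hq1 : q < 1) (hx : 0 < x) :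
    Summable fun p : ℕ × ℕ => pterm q x p := by
  have hqx0 : (0:ℝ) < q ^ x := Real.rpow_pos_of_pos hq0 x
  have hqx1 : q ^ x < 1 := rpow_lt_one' hq0 hq1 hx
  have hq2 : (0:ℝ) ≤ q ^ 2 := by positivity
  have hq21 : (q:ℝ) ^ 2 < 1 := by nlinarith
  have hgeo : Summable fun n : ℕ => (q ^ x : ℝ) ^ (n + 1) := by
    refine ((summable_geometric_of_lt_one hqx0.le hqx1).mul_left (q ^ x)).congr fun n => ?_
    rw [← pow_succ']
  have hbig : Summable fun p : ℕ × ℕ => ((q:ℝ) ^ 2) ^ p.1 * ((q ^ x : ℝ) ^ (p.2 + 1)) :=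
    Summable.mul_of_nonneg (summable_geometric_of_lt_one hq2 hq21) hgeo
      (fun k => by positivity) (fun n => by positivity)
  refine Summable.of_nonneg_of_le (fun p => ?_) (fun p => ?_) hbig
  · have hn1 : (q:ℝ) ^ (p.2 + 1) ≤ 1 := pow_le_one₀ hq0.le hq1.le
    have hb : (0:ℝ) ≤ (q ^ x * q ^ (2 * p.1)) ^ (p.2 + 1) := by positivity
    rw [pterm]
    apply div_nonneg (mul_nonneg hb (by linarith)) (by positivity)
  · rw [pterm]
    have hn1 : (q:ℝ) ^ (p.2 + 1) ≤ 1 := pow_le_one₀ hq0.le hq1.le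
    have hb : (0:ℝ) ≤ (q ^ x * q ^ (2 * p.1)) ^ (p.2 + 1) := by positivity
    have hd : (1:ℝ) ≤ (p.2 : ℝ) + 1 := by
      have := Nat.cast_nonneg (α := ℝ) p.2; linarith
    have h1 : (q ^ x * q ^ (2 * p.1)) ^ (p.2 + 1) * (1 - q ^ (p.2 + 1)) / ((p.2 : ℝ) + 1)
        ≤ (q ^ x * q ^ (2 * p.1)) ^ (p.2 + 1) := by
      rw [div_le_iff₀ (by positivity)]
      have hq0' : (0:ℝ) ≤ q ^ (p.2 + 1) := by positivity
      nlinarith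
    refine h1.trans ?_
    have key : ((q:ℝ) ^ (2 * p.1)) ^ (p.2 + 1) ≤ ((q:ℝ) ^ 2) ^ p.1 :=
      calc ((q:ℝ) ^ (2 * p.1)) ^ (p.2 + 1) ≤ ((q:ℝ) ^ (2 * p.1)) ^ 1 :=
            pow_le_pow_of_le_one (by positivity) (pow_le_one₀ hq0.le hq1.le) (by omega)
        _ = ((q:ℝ) ^ 2) ^ p.1 := by rw [pow_one, pow_mul]
    calc (q ^ x * q ^ (2 * p.1)) ^ (p.2 + 1)
        = ((q:ℝ) ^ (2 * p.1)) ^ (p.2 + 1) * (q ^ x) ^ (p.2 + 1) := by rw [mul_pow]; ring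
      _ ≤ ((q:ℝ) ^ 2) ^ p.1 * (q ^ x) ^ (p.2 + 1) :=
          mul_le_mul_of_nonneg_right key (by positivity)


lemma qG_eq (hq0 : 0 < q) (hq1 : q < 1) (hx : 0 < x) :
    qG q x = Real.sqrt (1 - q) * Real.exp (∑' p : ℕ × ℕ, pterm q x p) := by
  have hq2 : (0:ℝ) < q ^ 2 := by positivity
  have hq21 : (q:ℝ) ^ 2 < 1 := by nlinarith
  have hqx0 : (0:ℝ) < q ^ x := Real.rpow_pos_of_pos hq0 x
  have hqx1 : q ^ x < 1 := rpow_lt_one' hq0 hq1 hx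
  have hqx10 : (0:ℝ) < q ^ (x + 1) := Real.rpow_pos_of_pos hq0 _
  have hqx11 : q ^ (x + 1) < 1 := rpow_lt_one' hq0 hq1 (by linarith)
  have e1 : ((q:ℝ) ^ 2) ^ (x / 2 : ℝ) = q ^ x := by
    rw [← Real.rpow_natCast q 2, ← Real.rpow_mul hq0.le,
      show ((2:ℕ):ℝ) * (x / 2) = x by push_cast; ring]
  have e2 : ((q:ℝ) ^ 2) ^ ((x + 1) / 2 : ℝ) = q ^ (x + 1) := by
    rw [← Real.rpow_natCast q 2, ← Real.rpow_mul hq0.le,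
      show ((2:ℕ):ℝ) * ((x + 1) / 2) = x + 1 by push_cast; ring]
  have hs0 : (0:ℝ) < 1 - q ^ 2 := by nlinarith
  have hsplit : (1 - q ^ 2 : ℝ) ^ (1 - x / 2 : ℝ)
      = (1 - q ^ 2 : ℝ) ^ (1 - (x + 1) / 2 : ℝ) * (Real.sqrt (1 - q) * Real.sqrt (1 + q)) := by
    rw [show (1 - x / 2 : ℝ) = (1 - (x + 1) / 2) + 1 / 2 by ring, Real.rpow_add hs0]
    congr 1
    rw [← Real.sqrt_eq_rpow, show (1 - q ^ 2 : ℝ) = (1 - q) * (1 + q) by ring]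
    exact Real.sqrt_mul (by linarith) _
  have hPA := qPochInf_eq hqx0.le hqx1 hq2.le hq21
  have hPB := qPochInf_eq hqx10.le hqx11 hq2.le hq21
  have hP : 0 < qPochInf (q ^ 2) (q ^ 2) := qPochInf_pos hq2.le hq21 hq2.le hq21
  have hSA : Summable fun k : ℕ => Real.log (1 - q ^ x * (q ^ 2) ^ k) :=
    summable_logPoch hqx0.le hqx1 hq2.le hq21
  have hSB : Summable fun k : ℕ => Real.log (1 - q ^ (x + 1) * (q ^ 2) ^ k) :=
    summable_logPoch hqx10.le hqx11 hq2.le hq21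
  have hinner := fun k => hasSum_inner hq0 hq1 hx k
  have hsum := summable_pterm hq0 hq1 hx
  have hkey : (∑' k : ℕ, Real.log (1 - q ^ (x + 1) * (q ^ 2) ^ k))
      - (∑' k : ℕ, Real.log (1 - q ^ x * (q ^ 2) ^ k)) = ∑' p : ℕ × ℕ, pterm q x p := by
    rw [← Summable.tsum_sub hSB hSA, Summable.tsum_prod' hsum (fun k => (hinner k).summable)]
    exact tsum_congr fun k => ((hinner k).tsum_eq).symm
  rw [qG, qGamma, qGamma, e1, e2, hPA, hPB, hsplit, ← hkey, Real.exp_sub]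
  have hne1 : qPochInf (q ^ 2) (q ^ 2) ≠ 0 := hP.ne'
  have hne2 : Real.exp (∑' k : ℕ, Real.log (1 - q ^ x * (q ^ 2) ^ k)) ≠ 0 := Real.exp_ne_zero _
  have hne3 : Real.exp (∑' k : ℕ, Real.log (1 - q ^ (x + 1) * (q ^ 2) ^ k)) ≠ 0 :=
    Real.exp_ne_zero _
  have hne4 : ((1 - q ^ 2 : ℝ) ^ (1 - (x + 1) / 2 : ℝ)) ≠ 0 := (Real.rpow_pos_of_pos hs0 _).ne'
  have hne5 : Real.sqrt (1 + q) ≠ 0 := (Real.sqrt_pos.2 (by linarith)).ne'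
  field_simp

lemma pterm_eq (hq0 : 0 < q) (p : ℕ × ℕ) (w : ℝ) :
    pterm q w p = Real.exp ((((p.2:ℝ) + 1) * Real.log q) * w)
      * ((q ^ (2 * p.1)) ^ (p.2 + 1) * (1 - q ^ (p.2 + 1)) / ((p.2:ℝ) + 1)) := by
  rw [pterm, mul_pow, Real.rpow_def_of_pos hq0, ← Real.exp_nat_mul,
    show ((p.2 + 1 : ℕ) : ℝ) * (Real.log q * w) = (((p.2:ℝ) + 1) * Real.log q) * w by
      push_cast; ring]
  ring

lemma ptermC_pos (hq0 : 0 < q) (hq1 : q < 1) (p : ℕ × ℕ) :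
    0 < (q ^ (2 * p.1)) ^ (p.2 + 1) * (1 - q ^ (p.2 + 1)) / ((p.2:ℝ) + 1) := by
  have h1 : (q:ℝ) ^ (p.2 + 1) < 1 := pow_lt_one₀ hq0.le hq1 (by omega)
  have h2 : (0:ℝ) < ((p.2:ℝ) + 1) := by positivity
  exact div_pos (mul_pos (by positivity) (by linarith)) h2

lemma pterm_lt (hq0 : 0 < q) (hq1 : q < 1) (p : ℕ × ℕ) (hxy : x < y) :
    pterm q y p < pterm q x p := by
  rw [pterm_eq hq0, pterm_eq hq0]
  refine mul_lt_mul_of_pos_right (Real.exp_lt_exp.2 ?_) (ptermC_pos hq0 hq1 p)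
  have hlq : Real.log q < 0 := Real.log_neg hq0 hq1
  have hp : (0:ℝ) < (p.2:ℝ) + 1 := by positivity
  nlinarith [mul_pos hp (sub_pos.2 hxy)]

lemma pterm_convex (hq0 : 0 < q) (hq1 : q < 1) (p : ℕ × ℕ) {a b : ℝ}
    (ha : 0 ≤ a) (hb : 0 ≤ b) (hab : a + b = 1) :
    pterm q (a * x + b * y) p ≤ a * pterm q x p + b * pterm q y p := by
  rw [pterm_eq hq0, pterm_eq hq0, pterm_eq hq0]
  set μ : ℝ := ((p.2:ℝ) + 1) * Real.log q with hμ
  set C : ℝ := (q ^ (2 * p.1)) ^ (p.2 + 1) * (1 - q ^ (p.2 + 1)) / ((p.2:ℝ) + 1) with hC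
  have hCpos : 0 ≤ C := (ptermC_pos hq0 hq1 p).le
  have h := convexOn_exp.2 (Set.mem_univ (μ * x)) (Set.mem_univ (μ * y)) ha hb hab
  simp only [smul_eq_mul] at h
  rw [show μ * (a * x + b * y) = a * (μ * x) + b * (μ * y) by ring]
  calc Real.exp (a * (μ * x) + b * (μ * y)) * C
      ≤ (a * Real.exp (μ * x) + b * Real.exp (μ * y)) * C :=
        mul_le_mul_of_nonneg_right h hCpos
    _ = a * (Real.exp (μ * x) * C) + b * (Real.exp (μ * y) * C) := by ring

end Main

theorem stmt11 (q : ℝ) (hq0 : 0 < q) (hq1 : q < 1) :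
    StrictAntiOn (qG q) (Ioi 0) ∧ ConvexOn ℝ (Ioi 0) (fun x => Real.log (qG q x)) := by
  have h1q : (0:ℝ) < 1 - q := by linarith
  have hsq : 0 < Real.sqrt (1 - q) := Real.sqrt_pos.2 h1q
  constructor
  · intro x hx y hy hxy
    rw [qG_eq hq0 hq1 (mem_Ioi.mp hx), qG_eq hq0 hq1 (mem_Ioi.mp hy)]
    have hF : (∑' p : ℕ × ℕ, pterm q y p) < ∑' p : ℕ × ℕ, pterm q x p :=
      Summable.tsum_lt_tsum (f := fun p : ℕ × ℕ => pterm q y p)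
        (Pi.le_def.mpr fun p => (pterm_lt hq0 hq1 p hxy).le)
        (pterm_lt hq0 hq1 (0, 0) hxy)
        (summable_pterm hq0 hq1 (mem_Ioi.mp hy)) (summable_pterm hq0 hq1 (mem_Ioi.mp hx))
    exact mul_lt_mul_of_pos_left (Real.exp_lt_exp.2 hF) hsq
  · refine ⟨convex_Ioi 0, fun x hx y hy a b ha hb hab => ?_⟩
    have hx' : 0 < x := mem_Ioi.mp hx
    have hy' : 0 < y := mem_Ioi.mp hy
    have hz : 0 < a * x + b * y := by
      have := (convex_Ioi (0:ℝ)) hx hy ha hb hab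
      simpa using this
    simp only [smul_eq_mul]
    rw [qG_eq hq0 hq1 hx', qG_eq hq0 hq1 hy', qG_eq hq0 hq1 hz,
      Real.log_mul hsq.ne' (Real.exp_ne_zero _), Real.log_mul hsq.ne' (Real.exp_ne_zero _),
      Real.log_mul hsq.ne' (Real.exp_ne_zero _), Real.log_exp, Real.log_exp, Real.log_exp]
    have hsx := summable_pterm hq0 hq1 hx'
    have hsy := summable_pterm hq0 hq1 hy'
    have hsz := summable_pterm hq0 hq1 hz
    have hR : (∑' p : ℕ × ℕ, (a * pterm q x p + b * pterm q y p))
        = a * (∑' p : ℕ × ℕ, pterm q x p) + b * (∑' p : ℕ × ℕ, pterm q y p) := by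
      rw [Summable.tsum_add (hsx.mul_left a) (hsy.mul_left b), tsum_mul_left, tsum_mul_left]
    have hFz : (∑' p : ℕ × ℕ, pterm q (a * x + b * y) p)
        ≤ a * (∑' p : ℕ × ℕ, pterm q x p) + b * (∑' p : ℕ × ℕ, pterm q y p) := by
      rw [← hR]
      exact Summable.tsum_le_tsum (fun p => pterm_convex hq0 hq1 p ha hb hab) hsz
        ((hsx.mul_left a).add (hsy.mul_left b))
    have hlog : a * Real.log (Real.sqrt (1 - q)) + b * Real.log (Real.sqrt (1 - q))
        = Real.log (Real.sqrt (1 - q)) := by rw [← add_mul, hab, one_mul]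
    nlinarith [hFz, hlog]
end

section
/- Let 0<q<1 and k>0, and let f be a function on (0,∞) satisfying 1/f(x+1) = [x]_q^k f(x) for all x>0 and f(1)=1. If f is convex for all x>M for some M≥0, then f(x) = G_q(x)^k for all x>0. -/
open Real Set

namespace Stmt12Aux
set_option maxHeartbeats 1000000

lemma factor_pos {a Q : ℝ} (ha0 : 0 ≤ a) (ha1 : a < 1) (hQ0 : 0 ≤ Q) (hQ1 : Q ≤ 1) (j : ℕ) :
    0 < 1 - a * Q ^ j := by
  nlinarith [pow_nonneg hQ0 j, pow_le_one₀ hQ0 hQ1 (n := j)]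

lemma summable_log {a Q : ℝ} (ha0 : 0 ≤ a) (ha1 : a < 1) (hQ0 : 0 ≤ Q) (hQ1 : Q < 1) :
    Summable (fun j : ℕ => Real.log (1 - a * Q ^ j)) := by
  apply Summable.of_norm_bounded
      ((summable_geometric_of_lt_one hQ0 hQ1).mul_left (a / (1 - a)))
  intro j
  have hQj : 0 ≤ Q ^ j := pow_nonneg hQ0 j
  have hQj1 : Q ^ j ≤ 1 := pow_le_one₀ hQ0 hQ1.le
  have h1 : 0 < 1 - a * Q ^ j := factor_pos ha0 ha1 hQ0 hQ1.le j
  have hle : a * Q ^ j ≤ a := by nlinarith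
  have h2 : Real.log (1 - a * Q ^ j) ≤ 0 := by
    apply Real.log_nonpos h1.le; nlinarith
  rw [Real.norm_eq_abs, abs_of_nonpos h2]
  have h3 := Real.log_le_sub_one_of_pos (x := (1 - a * Q ^ j)⁻¹) (by positivity)
  rw [Real.log_inv] at h3
  have h4 : (1 - a * Q ^ j)⁻¹ - 1 = (a * Q ^ j) / (1 - a * Q ^ j) := by
    field_simp
    ring
  have h5 : (a * Q ^ j) / (1 - a * Q ^ j) ≤ (a * Q ^ j) / (1 - a) := by
    apply div_le_div_of_nonneg_left (by positivity) (by linarith) (by nlinarith)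
  calc -Real.log (1 - a * Q ^ j) ≤ (1 - a * Q ^ j)⁻¹ - 1 := by linarith
    _ ≤ (a * Q ^ j) / (1 - a) := by rw [h4]; exact h5
    _ = a / (1 - a) * Q ^ j := by ring

lemma hasProd_poch {a Q : ℝ} (ha0 : 0 ≤ a) (ha1 : a < 1) (hQ0 : 0 ≤ Q) (hQ1 : Q < 1) :
    HasProd (fun j : ℕ => 1 - a * Q ^ j) (qPochInf a Q) :=
  (Real.hasProd_of_hasSum_log (fun j => factor_pos ha0 ha1 hQ0 hQ1.le j)
    (summable_log ha0 ha1 hQ0 hQ1).hasSum).multipliable.hasProd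

lemma poch_eq_exp {a Q : ℝ} (ha0 : 0 ≤ a) (ha1 : a < 1) (hQ0 : 0 ≤ Q) (hQ1 : Q < 1) :
    qPochInf a Q = Real.exp (∑' j : ℕ, Real.log (1 - a * Q ^ j)) := by
  have hfn : ∀ (_ : Unit) (j : ℕ), 0 < 1 - a * Q ^ j := fun _ j => factor_pos ha0 ha1 hQ0 hQ1.le j
  have hs : ∀ (_ : Unit), Summable (fun j : ℕ => Real.log (1 - a * Q ^ j)) :=
    fun _ => summable_log ha0 ha1 hQ0 hQ1
  have h := Real.rexp_tsum_eq_tprod (fun j => hfn () j) (hs ())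
  rw [qPochInf, ← h]

lemma poch_pos {a Q : ℝ} (ha0 : 0 ≤ a) (ha1 : a < 1) (hQ0 : 0 ≤ Q) (hQ1 : Q < 1) :
    0 < qPochInf a Q := by
  rw [poch_eq_exp ha0 ha1 hQ0 hQ1]; exact Real.exp_pos _

lemma poch_shift {a Q : ℝ} (ha0 : 0 ≤ a) (ha1 : a < 1) (hQ0 : 0 ≤ Q) (hQ1 : Q < 1) :
    qPochInf a Q = (1 - a) * qPochInf (a * Q) Q := by
  have haQ0 : 0 ≤ a * Q := mul_nonneg ha0 hQ0
  have haQ1 : a * Q < 1 := by nlinarith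
  rw [poch_eq_exp ha0 ha1 hQ0 hQ1, poch_eq_exp haQ0 haQ1 hQ0 hQ1]
  have hsum := summable_log ha0 ha1 hQ0 hQ1
  rw [hsum.tsum_eq_zero_add]
  have e1 : (∑' j : ℕ, Real.log (1 - a * Q ^ (j + 1)))
      = ∑' j : ℕ, Real.log (1 - a * Q * Q ^ j) := tsum_congr fun j => by ring_nf
  rw [Real.exp_add, e1, pow_zero, mul_one, Real.exp_log (by linarith)]


lemma tendsto_partial_prods {a Q : ℝ} (ha0 : 0 ≤ a) (ha1 : a < 1) (hQ0 : 0 ≤ Q) (hQ1 : Q < 1) :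
    Filter.Tendsto (fun n : ℕ => ∏ j ∈ Finset.range n, (1 - a * Q ^ j))
      Filter.atTop (nhds (qPochInf a Q)) :=
  (hasProd_poch ha0 ha1 hQ0 hQ1).tendsto_prod_nat

section Gq
variable {q : ℝ}

lemma hs2_0 {q : ℝ} : (0:ℝ) ≤ q ^ 2 := by positivity
lemma hs2_1 (hq0 : 0 < q) (hq1 : q < 1) : q ^ 2 < 1 := by nlinarith

lemma rp_pos (hq0 : 0 < q) (x : ℝ) : 0 < q ^ x := Real.rpow_pos_of_pos hq0 x
lemma rp_lt_one (hq0 : 0 < q) (hq1 : q < 1) {x : ℝ} (hx : 0 < x) : q ^ x < 1 := Real.rpow_lt_one hq0.le hq1 hx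

lemma P_pos (hq0 : 0 < q) (hq1 : q < 1) {x : ℝ} (hx : 0 < x) : 0 < qPochInf (q ^ x) (q ^ 2) :=
  poch_pos (rp_pos hq0 x).le (rp_lt_one hq0 hq1 hx) (hs2_0) (hs2_1 hq0 hq1)

lemma rp_add_two (hq0 : 0 < q) (x : ℝ) : q ^ (x + 2) = q ^ x * q ^ (2:ℕ) := by
  rw [Real.rpow_add hq0, ← Real.rpow_natCast q 2]; norm_num

lemma P_shift (hq0 : 0 < q) (hq1 : q < 1) {x : ℝ} (hx : 0 < x) :
    qPochInf (q ^ x) (q ^ 2) = (1 - q ^ x) * qPochInf (q ^ (x + 2)) (q ^ 2) := by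
  rw [rp_add_two hq0, ← poch_shift (rp_pos hq0 x).le (rp_lt_one hq0 hq1 hx) (hs2_0) (hs2_1 hq0 hq1)]

lemma qG_formula (hq0 : 0 < q) (hq1 : q < 1) {x : ℝ} (hx : 0 < x) :
    qG q x = Real.sqrt (1 - q) *
      (qPochInf (q ^ (x + 1)) (q ^ 2) / qPochInf (q ^ x) (q ^ 2)) := by
  have hq2 : ((q:ℝ) ^ (2:ℕ)) = q ^ ((2:ℕ):ℝ) := (Real.rpow_natCast q 2).symm
  have hp1 : ((q ^ (2:ℕ) : ℝ)) ^ (x / 2) = q ^ x := by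
    rw [hq2, ← Real.rpow_mul hq0.le]
    congr 1; push_cast; ring
  have hp2 : ((q ^ (2:ℕ) : ℝ)) ^ ((x + 1) / 2) = q ^ (x + 1) := by
    rw [hq2, ← Real.rpow_mul hq0.le]
    congr 1; push_cast; ring
  have h1Q : (0:ℝ) < 1 - q ^ (2:ℕ) := by nlinarith
  have hE : (1 - q ^ (2:ℕ) : ℝ) ^ (1 - x / 2) =
      (1 - q ^ (2:ℕ) : ℝ) ^ (1 - (x + 1) / 2) * (Real.sqrt (1 - q) * Real.sqrt (1 + q)) := by
    rw [show (1:ℝ) - x / 2 = (1 - (x + 1) / 2) + 1 / 2 by ring, Real.rpow_add h1Q]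
    congr 1
    rw [← Real.sqrt_mul (by linarith) (1 + q), ← Real.sqrt_eq_rpow]
    congr 1
    ring
  have hA : (0:ℝ) < qPochInf (q ^ (2:ℕ)) (q ^ (2:ℕ)) :=
    poch_pos (hs2_0) (hs2_1 hq0 hq1) (hs2_0) (hs2_1 hq0 hq1)
  have hB : (0:ℝ) < qPochInf (q ^ x) (q ^ 2) := P_pos hq0 hq1 hx
  have hC : (0:ℝ) < qPochInf (q ^ (x + 1)) (q ^ 2) := P_pos hq0 hq1 (by linarith)
  have hE2 : (0:ℝ) < (1 - q ^ (2:ℕ) : ℝ) ^ (1 - (x + 1) / 2) := Real.rpow_pos_of_pos h1Q _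
  have hsq : (0:ℝ) < Real.sqrt (1 + q) := Real.sqrt_pos.mpr (by linarith)
  have hsq' : (0:ℝ) < Real.sqrt (1 - q) := Real.sqrt_pos.mpr (by linarith)
  rw [qG, qGamma, qGamma, hp1, hp2, hE]
  field_simp
lemma qG_pos (hq0 : 0 < q) (hq1 : q < 1) {x : ℝ} (hx : 0 < x) : 0 < qG q x := by
  rw [qG_formula hq0 hq1 hx]
  exact mul_pos (Real.sqrt_pos.mpr (by linarith))
    (div_pos (P_pos hq0 hq1 (by linarith)) (P_pos hq0 hq1 hx))

lemma qG_funeq (hq0 : 0 < q) (hq1 : q < 1) {x : ℝ} (hx : 0 < x) :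
    qBracket q x * (qG q x * qG q (x + 1)) = 1 := by
  rw [qG_formula hq0 hq1 hx, qG_formula hq0 hq1 (by linarith : (0:ℝ) < x + 1), qBracket]
  rw [show x + 1 + 1 = x + 2 by ring]
  have h1 := P_pos hq0 hq1 (by linarith : (0:ℝ) < x + 1)
  have h2 := P_pos hq0 hq1 (by linarith : (0:ℝ) < x + 2)
  have hsh := P_shift hq0 hq1 hx
  have hqx1 : q ^ x < 1 := rp_lt_one hq0 hq1 hx
  set s := Real.sqrt (1 - q) with hs
  have hss : s * s = 1 - q := Real.mul_self_sqrt (by linarith)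
  have hs0 : s ≠ 0 := by
    have : 0 < s := Real.sqrt_pos.mpr (by linarith)
    exact this.ne'
  have hx0 : (1:ℝ) - q ^ x ≠ 0 := by linarith
  rw [hsh, ← hss]
  field_simp

end Gq


end Stmt12Aux

set_option maxHeartbeats 1600000 in
theorem stmt12 (q k : ℝ) (hq0 : 0 < q) (hq1 : q < 1) (hk : 0 < k)
    (f : ℝ → ℝ)
    (hfe : ∀ x > 0, 1 / f (x + 1) = qBracket q x ^ k * f x)
    (hf1 : f 1 = 1)
    (M : ℝ) (hM : 0 ≤ M) (hconv : ConvexOn ℝ (Ioi M) f) :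
    ∀ x > 0, f x = qG q x ^ k := by
  have hbr_pos : ∀ x : ℝ, 0 < x → 0 < qBracket q x := by
    intro x hx
    have h1 : q ^ x < 1 := Real.rpow_lt_one hq0.le hq1 hx
    rw [qBracket]
    apply div_pos <;> linarith
  have hbrk_pos : ∀ x : ℝ, 0 < x → 0 < qBracket q x ^ k :=
    fun x hx => Real.rpow_pos_of_pos (hbr_pos x hx) k
  -- positivity at positive integer points
  have hnat : ∀ n : ℕ, 0 < f ((n : ℝ) + 1) := by
    intro n
    induction n with
    | zero => norm_num [hf1]
    | succ n ih =>
      have hx : (0:ℝ) < (n : ℝ) + 1 := by positivity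
      have h := hfe ((n : ℝ) + 1) hx
      have hpos : 0 < 1 / f ((n : ℝ) + 1 + 1) := by
        rw [h]; exact mul_pos (hbrk_pos _ hx) ih
      have h2 : 0 < f ((n : ℝ) + 1 + 1) := one_div_pos.mp hpos
      have e : ((n + 1 : ℕ) : ℝ) + 1 = (n : ℝ) + 1 + 1 := by push_cast; ring
      rw [e]
      exact h2
  -- positivity above M
  have hfpos : ∀ x : ℝ, M < x → 0 < f x := by
    intro x hxM
    have hx0 : 0 < x := lt_of_le_of_lt hM hxM
    by_contra hle
    push_neg at hle
    have hprop : ∀ n : ℕ, f (x + n) ≤ 0 := by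
      intro n
      induction n with
      | zero => simpa using hle
      | succ n ih =>
        have hxn : (0:ℝ) < x + n := by positivity
        have h := hfe (x + n) hxn
        by_contra hpos
        push_neg at hpos
        have e : x + ((n + 1 : ℕ) : ℝ) = x + n + 1 := by push_cast; ring
        rw [e] at hpos
        have h1 : 0 < 1 / f (x + n + 1) := one_div_pos.mpr hpos
        rw [h] at h1
        nlinarith [hbrk_pos (x + n) hxn]
    set m : ℕ := ⌊x⌋₊ + 1 with hm
    have hm1 : x < (m : ℝ) := by
      have := Nat.lt_floor_add_one x
      rw [hm]
      push_cast
      push_cast at this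
      linarith
    have hm2 : (m : ℝ) < x + 2 := by
      have := Nat.floor_le hx0.le
      rw [hm]
      push_cast
      linarith
    have hmpos : 0 < f (m : ℝ) := by
      have := hnat ⌊x⌋₊
      have e : ((m : ℕ) : ℝ) = ((⌊x⌋₊ : ℕ) : ℝ) + 1 := by rw [hm]; push_cast; ring
      rw [e]
      exact this
    have hseg : (m : ℝ) ∈ segment ℝ x (x + 2) := by
      rw [segment_eq_Icc (by linarith : x ≤ x + 2)]
      exact ⟨hm1.le, hm2.le⟩
    have hle2 := hconv.le_on_segment (mem_Ioi.mpr hxM) (mem_Ioi.mpr (by linarith : M < x + 2)) hseg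
    have h2 : f (x + 2) ≤ 0 := by
      have := hprop 2
      push_cast at this
      exact this
    have : f (m : ℝ) ≤ 0 := le_trans hle2 (max_le hle h2)
    linarith
  -- step formulas
  have hnext : ∀ x : ℝ, 0 < x → 0 < f x →
      0 < f (x + 1) ∧ f (x + 1) = (qBracket q x ^ k * f x)⁻¹ := by
    intro x hx hfx
    have h := hfe x hx
    have hpos : 0 < qBracket q x ^ k * f x := mul_pos (hbrk_pos x hx) hfx
    have hf1pos : 0 < f (x + 1) := one_div_pos.mp (h ▸ hpos)
    refine ⟨hf1pos, ?_⟩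
    have hne : f (x + 1) ≠ 0 := hf1pos.ne'
    field_simp at h ⊢
    rw [eq_div_iff (hbrk_pos x hx).ne']
    linarith [h]
  -- ratio recurrence
  have hq2_0 : (0:ℝ) ≤ q ^ 2 := by positivity
  have hq2_1 : q ^ 2 < 1 := by nlinarith
  have hfac : ∀ y : ℝ, 0 < y → 0 < 1 - q ^ y := by
    intro y hy
    have := Real.rpow_lt_one hq0.le hq1 hy
    linarith
  have hratio : ∀ x : ℝ, M < x →
      f (x + 2) = ((1 - q ^ x) / (1 - q ^ (x + 1))) ^ k * f x := by
    intro x hx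
    have hx0 : 0 < x := lt_of_le_of_lt hM hx
    have hfx := hfpos x hx
    obtain ⟨hp1, he1⟩ := hnext x hx0 hfx
    obtain ⟨hp2, he2⟩ := hnext (x + 1) (by linarith) hp1
    rw [show x + 1 + 1 = x + 2 by ring] at he2
    rw [he2, he1, mul_inv, inv_inv]
    have hb1 := hbr_pos x hx0
    have hb2 := hbr_pos (x + 1) (by linarith : (0:ℝ) < x + 1)
    have hbk1 := hbrk_pos x hx0
    have hbk2 := hbrk_pos (x + 1) (by linarith : (0:ℝ) < x + 1)
    have hbase : (1 - q ^ x) / (1 - q ^ (x + 1)) = qBracket q x / qBracket q (x + 1) := by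
      rw [qBracket, qBracket]
      have hb : (1:ℝ) - q ^ (x + 1) ≠ 0 := (hfac (x + 1) (by linarith)).ne'
      have hc : (1:ℝ) - q ≠ 0 := by linarith
      field_simp
    rw [hbase, Real.div_rpow hb1.le hb2.le]
    field_simp
  -- partial product identity
  have hprodpos : ∀ (x : ℝ), 0 < x → ∀ n : ℕ,
      0 < ∏ j ∈ Finset.range n, (1 - q ^ (x + 2 * (j:ℝ))) := by
    intro x hx n
    apply Finset.prod_pos
    intro j _
    exact hfac _ (by positivity)
  have hprodid : ∀ x : ℝ, M < x → ∀ n : ℕ,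
      f (x + 2 * (n:ℝ)) = ((∏ j ∈ Finset.range n, (1 - q ^ (x + 2 * (j:ℝ)))) /
        (∏ j ∈ Finset.range n, (1 - q ^ (x + 1 + 2 * (j:ℝ))))) ^ k * f x := by
    intro x hx n
    have hx0 : 0 < x := lt_of_le_of_lt hM hx
    induction n with
    | zero => norm_num [Real.one_rpow]
    | succ n ih =>
      have hxn : M < x + 2 * (n:ℝ) := by
        have : (0:ℝ) ≤ 2 * (n:ℝ) := by positivity
        linarith
      have h2 := hratio (x + 2 * (n:ℝ)) hxn
      have e : x + 2 * (((n:ℕ) + 1 : ℕ) : ℝ) = (x + 2 * (n:ℝ)) + 2 := by push_cast; ring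
      have hu := hprodpos x hx0 n
      have hv := hprodpos (x + 1) (by linarith : (0:ℝ) < x + 1) n
      have hf1' : 0 < 1 - q ^ (x + 2 * (n:ℝ)) := hfac _ (by positivity)
      have hf2' : 0 < 1 - q ^ (x + 1 + 2 * (n:ℝ)) := hfac _ (by positivity)
      rw [show x + 2 * (n:ℝ) + 1 = x + 1 + 2 * (n:ℝ) by ring] at h2
      rw [e, h2, ih, Finset.prod_range_succ, Finset.prod_range_succ, ← mul_assoc,
        ← Real.mul_rpow (le_of_lt (div_pos hf1' hf2')) (le_of_lt (div_pos hu hv))]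
      congr 2
      field_simp
  -- rewrite q-powers
  have hkey : ∀ (y : ℝ) (j : ℕ), q ^ y * (q ^ 2) ^ j = q ^ (y + 2 * (j:ℝ)) := by
    intro y j
    rw [Real.rpow_add hq0, ← Real.rpow_natCast q 2, ← Real.rpow_natCast (q ^ ((2:ℕ):ℝ)) j,
      ← Real.rpow_mul hq0.le]
    norm_num
  -- limit of f along x + 2n
  have htends : ∀ x : ℝ, M < x → Filter.Tendsto (fun n : ℕ => f (x + 2 * (n:ℝ))) Filter.atTop
      (nhds ((qPochInf (q ^ x) (q ^ 2) / qPochInf (q ^ (x + 1)) (q ^ 2)) ^ k * f x)) := by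
    intro x hx
    have hx0 : 0 < x := lt_of_le_of_lt hM hx
    have hP1p : 0 < qPochInf (q ^ (x + 1)) (q ^ 2) := Stmt12Aux.P_pos hq0 hq1 (by linarith)
    have t1 : Filter.Tendsto (fun n : ℕ => ∏ j ∈ Finset.range n, (1 - q ^ (x + 2 * (j:ℝ))))
        Filter.atTop (nhds (qPochInf (q ^ x) (q ^ 2))) := by
      have h := Stmt12Aux.tendsto_partial_prods (Real.rpow_pos_of_pos hq0 x).le
        (Real.rpow_lt_one hq0.le hq1 hx0) hq2_0 hq2_1
      apply h.congr
      intro n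
      exact Finset.prod_congr rfl fun j _ => by rw [hkey x j]
    have t2 : Filter.Tendsto (fun n : ℕ => ∏ j ∈ Finset.range n, (1 - q ^ (x + 1 + 2 * (j:ℝ))))
        Filter.atTop (nhds (qPochInf (q ^ (x + 1)) (q ^ 2))) := by
      have h := Stmt12Aux.tendsto_partial_prods (Real.rpow_pos_of_pos hq0 (x + 1)).le
        (Real.rpow_lt_one hq0.le hq1 (by linarith : (0:ℝ) < x + 1)) hq2_0 hq2_1
      apply h.congr
      intro n
      exact Finset.prod_congr rfl fun j _ => by rw [hkey (x + 1) j]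
    have t3 := t1.div t2 hP1p.ne'
    have t4 := t3.rpow_const (p := k) (Or.inr hk.le)
    have t5 := t4.mul_const (f x)
    exact Filter.Tendsto.congr (fun n => (hprodid x hx n).symm) t5
  -- convex sandwich
  have hsand : ∀ u : ℝ, M < u → f (u + 1) ≤ max (f u) (f (u + 2)) := by
    intro u hu
    have hseg : u + 1 ∈ segment ℝ u (u + 2) := by
      rw [segment_eq_Icc (by linarith : u ≤ u + 2)]
      exact ⟨by linarith, by linarith⟩
    exact hconv.le_on_segment (mem_Ioi.mpr hu) (mem_Ioi.mpr (by linarith : M < u + 2)) hseg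
  -- equality of limits
  have hL : ∀ x : ℝ, M < x →
      (qPochInf (q ^ x) (q ^ 2) / qPochInf (q ^ (x + 1)) (q ^ 2)) ^ k * f x
      = (qPochInf (q ^ (x + 1)) (q ^ 2) / qPochInf (q ^ (x + 2)) (q ^ 2)) ^ k * f (x + 1) := by
    intro x hx
    set A := (qPochInf (q ^ x) (q ^ 2) / qPochInf (q ^ (x + 1)) (q ^ 2)) ^ k * f x with hA
    set B := (qPochInf (q ^ (x + 1)) (q ^ 2) / qPochInf (q ^ (x + 2)) (q ^ 2)) ^ k * f (x + 1)
      with hB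
    have T0 : Filter.Tendsto (fun n : ℕ => f (x + 2 * (n:ℝ))) Filter.atTop (nhds A) := htends x hx
    have T1 : Filter.Tendsto (fun n : ℕ => f (x + 1 + 2 * (n:ℝ))) Filter.atTop (nhds B) := by
      have h := htends (x + 1) (by linarith)
      rw [show x + 1 + 1 = x + 2 by ring] at h
      exact h
    have T0' : Filter.Tendsto (fun n : ℕ => f (x + 2 * (n:ℝ) + 2)) Filter.atTop (nhds A) := by
      have h := T0.comp (Filter.tendsto_add_atTop_nat 1)
      apply h.congr
      intro n
      simp only [Function.comp]
      congr 1
      push_cast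
      ring
    have T1' : Filter.Tendsto (fun n : ℕ => f (x + 1 + 2 * (n:ℝ) + 2)) Filter.atTop (nhds B) := by
      have h := T1.comp (Filter.tendsto_add_atTop_nat 1)
      apply h.congr
      intro n
      simp only [Function.comp]
      congr 1
      push_cast
      ring
    have ineq1 : ∀ n : ℕ, f (x + 1 + 2 * (n:ℝ)) ≤ max (f (x + 2 * (n:ℝ))) (f (x + 2 * (n:ℝ) + 2)) := by
      intro n
      have hn : (0:ℝ) ≤ 2 * (n:ℝ) := by positivity
      have h := hsand (x + 2 * (n:ℝ)) (by linarith)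
      rw [show x + 2 * (n:ℝ) + 1 = x + 1 + 2 * (n:ℝ) by ring] at h
      exact h
    have ineq2 : ∀ n : ℕ, f (x + 2 * (n:ℝ) + 2) ≤
        max (f (x + 1 + 2 * (n:ℝ))) (f (x + 1 + 2 * (n:ℝ) + 2)) := by
      intro n
      have hn : (0:ℝ) ≤ 2 * (n:ℝ) := by positivity
      have h := hsand (x + 1 + 2 * (n:ℝ)) (by linarith)
      rw [show x + 1 + 2 * (n:ℝ) + 1 = x + 2 * (n:ℝ) + 2 by ring] at h
      exact h
    have Tmax0 : Filter.Tendsto (fun n : ℕ => max (f (x + 2 * (n:ℝ))) (f (x + 2 * (n:ℝ) + 2)))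
        Filter.atTop (nhds A) := by
      have h := T0.max T0'
      rwa [max_self] at h
    have Tmax1 : Filter.Tendsto
        (fun n : ℕ => max (f (x + 1 + 2 * (n:ℝ))) (f (x + 1 + 2 * (n:ℝ) + 2)))
        Filter.atTop (nhds B) := by
      have h := T1.max T1'
      rwa [max_self] at h
    have hBA : B ≤ A := le_of_tendsto_of_tendsto' T1 Tmax0 ineq1
    have hAB : A ≤ B := le_of_tendsto_of_tendsto' T0' Tmax1 ineq2
    linarith
  -- main identity above M
  have hmain : ∀ x : ℝ, M < x → f x = qG q x ^ k := by
    intro x hx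
    have hx0 : 0 < x := lt_of_le_of_lt hM hx
    have hfx := hfpos x hx
    obtain ⟨hp1, he1⟩ := hnext x hx0 hfx
    have hAB := hL x hx
    set P0 := qPochInf (q ^ x) (q ^ 2) with hP0
    set P1 := qPochInf (q ^ (x + 1)) (q ^ 2) with hP1
    set P2 := qPochInf (q ^ (x + 2)) (q ^ 2) with hP2
    have hP0p : 0 < P0 := Stmt12Aux.P_pos hq0 hq1 hx0
    have hP1p : 0 < P1 := Stmt12Aux.P_pos hq0 hq1 (by linarith)
    have hP2p : 0 < P2 := Stmt12Aux.P_pos hq0 hq1 (by linarith)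
    have hsh : P0 = (1 - q ^ x) * P2 := Stmt12Aux.P_shift hq0 hq1 hx0
    have hb := hbr_pos x hx0
    have hbk := hbrk_pos x hx0
    have hq1x : 0 < 1 - q ^ x := hfac x hx0
    rw [he1] at hAB
    have h2 : (P1 / P2) ^ k = (P0 / P1) ^ k * f x * (qBracket q x ^ k * f x) := by
      rw [hAB]
      have hne : qBracket q x ^ k * f x ≠ 0 := (mul_pos hbk hfx).ne'
      field_simp
    have h3 : f x * f x = ((P1 / P2) / ((P0 / P1) * qBracket q x)) ^ k := by
      rw [Real.div_rpow (div_pos hP1p hP2p).le (mul_pos (div_pos hP0p hP1p) hb).le,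
        Real.mul_rpow (div_pos hP0p hP1p).le hb.le, h2]
      have hd1 : (0:ℝ) < (P0 / P1) ^ k := Real.rpow_pos_of_pos (div_pos hP0p hP1p) k
      field_simp
    have key : f x * f x = ((1 - q) * (P1 / P0) * (P1 / P0)) ^ k := by
      rw [h3]
      congr 1
      rw [qBracket, hsh]
      have h1q : (1:ℝ) - q ≠ 0 := by linarith
      field_simp
    have hGf : qG q x = Real.sqrt (1 - q) * (P1 / P0) := Stmt12Aux.qG_formula hq0 hq1 hx0
    have hGp : 0 < qG q x := Stmt12Aux.qG_pos hq0 hq1 hx0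
    have hGk : 0 < qG q x ^ k := Real.rpow_pos_of_pos hGp k
    have hsq : qG q x * qG q x = (1 - q) * (P1 / P0) * (P1 / P0) := by
      rw [hGf, mul_mul_mul_comm, Real.mul_self_sqrt (by linarith : (0:ℝ) ≤ 1 - q)]
      ring
    have h4 : qG q x ^ k * qG q x ^ k = ((1 - q) * (P1 / P0) * (P1 / P0)) ^ k := by
      rw [← Real.mul_rpow hGp.le hGp.le, hsq]
    have h5 : (f x - qG q x ^ k) * (f x + qG q x ^ k) = 0 := by
      linear_combination key - h4
    rcases mul_eq_zero.mp h5 with h6 | h6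
    · linarith [sub_eq_zero.mp h6]
    · linarith
  -- descent below M
  have hdesc : ∀ n : ℕ, ∀ x : ℝ, 0 < x → M < x + (n:ℝ) → f x = qG q x ^ k := by
    intro n
    induction n with
    | zero =>
      intro x hx0 hxM
      push_cast at hxM
      exact hmain x (by linarith)
    | succ n ih =>
      intro x hx0 hxM
      have hx1 : M < (x + 1) + (n:ℝ) := by push_cast at hxM; linarith
      have hfx1 : f (x + 1) = qG q (x + 1) ^ k := ih (x + 1) (by linarith) hx1
      have h := hfe x hx0
      have hG1p : 0 < qG q (x + 1) := Stmt12Aux.qG_pos hq0 hq1 (by linarith)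
      have hG1k : 0 < qG q (x + 1) ^ k := Real.rpow_pos_of_pos hG1p k
      have hbk := hbrk_pos x hx0
      have hb := hbr_pos x hx0
      rw [hfx1] at h
      have h' : 1 = qBracket q x ^ k * f x * qG q (x + 1) ^ k := by
        rw [one_div] at h
        field_simp at h
        linarith [h]
      have hfun := Stmt12Aux.qG_funeq hq0 hq1 hx0
      have hGp : 0 < qG q x := Stmt12Aux.qG_pos hq0 hq1 hx0
      have hGk : 0 < qG q x ^ k := Real.rpow_pos_of_pos hGp k
      have h5 : qBracket q x ^ k * qG q (x + 1) ^ k * qG q x ^ k = 1 := by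
        rw [← Real.mul_rpow hb.le hG1p.le, ← Real.mul_rpow (mul_pos hb hG1p).le hGp.le,
          show qBracket q x * qG q (x + 1) * qG q x
            = qBracket q x * (qG q x * qG q (x + 1)) by ring, hfun, Real.one_rpow]
      -- conclude
      have h6 : (f x - qG q x ^ k) * (qBracket q x ^ k * qG q (x + 1) ^ k) = 0 := by
        linear_combination -h' - h5
      rcases mul_eq_zero.mp h6 with h7 | h7
      · linarith [sub_eq_zero.mp h7]
      · nlinarith [mul_pos hbk hG1k]
  intro x hx0
  refine hdesc (⌊M⌋₊ + 1) x hx0 ?_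
  have h := Nat.lt_floor_add_one M
  push_cast
  push_cast at h
  linarith
end

section
/- Let 0<q<1 and k>0, and let f be a function on (0,∞) satisfying 1/f(x+1) = [x]_q^k f(x) for all x>0, f(1)=1, f(x) ≠ 0 for all x>0, and f(x+1) ≤ f(x) for all x>M for some M≥0. Then f(x) = G_q(x)^k for all x>0. -/
open Real Set Filter

set_option maxHeartbeats 1000000

section Aux

variable {Q a : ℝ}

lemma factor_pos (hQ0 : 0 ≤ Q) (hQ1 : Q ≤ 1) (ha0 : 0 ≤ a) (ha1 : a < 1) (k : ℕ) :
    0 < 1 - a * Q ^ k := by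
  have h1 : Q ^ k ≤ 1 := pow_le_one₀ hQ0 hQ1
  have h2 : 0 ≤ Q ^ k := pow_nonneg hQ0 k
  nlinarith

lemma log_abs_le (hQ0 : 0 ≤ Q) (hQ1 : Q ≤ 1) (ha0 : 0 ≤ a) (ha1 : a < 1) (k : ℕ) :
    |Real.log (1 - a * Q ^ k)| ≤ a * Q ^ k / (1 - a) := by
  set t := a * Q ^ k with ht
  have h1 : Q ^ k ≤ 1 := pow_le_one₀ hQ0 hQ1
  have h2 : 0 ≤ Q ^ k := pow_nonneg hQ0 k
  have ht0 : 0 ≤ t := mul_nonneg ha0 h2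
  have hta : t ≤ a := by nlinarith
  have htpos : 0 < 1 - t := by nlinarith
  have hlog_le : Real.log (1 - t) ≤ 0 := Real.log_nonpos (by linarith) (by linarith)
  rw [abs_of_nonpos hlog_le]
  have : -Real.log (1 - t) = Real.log (1 - t)⁻¹ := (Real.log_inv _).symm
  rw [this]
  have hb : Real.log (1 - t)⁻¹ ≤ (1 - t)⁻¹ - 1 :=
    Real.log_le_sub_one_of_pos (by positivity)
  have he : (1 - t)⁻¹ - 1 = t / (1 - t) := by field_simp; ring
  have hd : t / (1 - t) ≤ t / (1 - a) := by
    apply div_le_div_of_nonneg_left ht0 (by linarith) (by linarith)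
  linarith [hb, he ▸ hb]

lemma log_summable (hQ0 : 0 ≤ Q) (hQ1 : Q < 1) (ha0 : 0 ≤ a) (ha1 : a < 1) :
    Summable (fun k : ℕ => Real.log (1 - a * Q ^ k)) := by
  apply Summable.of_norm_bounded (g := fun k : ℕ => a * Q ^ k / (1 - a))
  · have : Summable (fun k : ℕ => Q ^ k) := summable_geometric_of_lt_one hQ0 hQ1
    simpa [mul_div_assoc, mul_comm, div_eq_mul_inv, mul_assoc] using
      (this.mul_left (a * (1 - a)⁻¹)).congr (fun k => by ring)
  · intro k
    rw [Real.norm_eq_abs]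
    exact log_abs_le hQ0 hQ1.le ha0 ha1 k

lemma hasProd_qPoch (hQ0 : 0 ≤ Q) (hQ1 : Q < 1) (ha0 : 0 ≤ a) (ha1 : a < 1) :
    HasProd (fun k : ℕ => 1 - a * Q ^ k)
      (Real.exp (∑' k : ℕ, Real.log (1 - a * Q ^ k))) := by
  have hs := (log_summable hQ0 hQ1 ha0 ha1).hasSum.rexp
  refine HasProd.congr_fun hs ?_
  intro k
  simp only [Function.comp_apply]
  exact (Real.exp_log (factor_pos hQ0 hQ1.le ha0 ha1 k)).symm

lemma qPochInf_eq_exp (hQ0 : 0 ≤ Q) (hQ1 : Q < 1) (ha0 : 0 ≤ a) (ha1 : a < 1) :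
    qPochInf a Q = Real.exp (∑' k : ℕ, Real.log (1 - a * Q ^ k)) :=
  (hasProd_qPoch hQ0 hQ1 ha0 ha1).tprod_eq

lemma qPochInf_pos_s13 (hQ0 : 0 ≤ Q) (hQ1 : Q < 1) (ha0 : 0 ≤ a) (ha1 : a < 1) :
    0 < qPochInf a Q := by
  rw [qPochInf_eq_exp hQ0 hQ1 ha0 ha1]; exact Real.exp_pos _

lemma tsum_log_abs_le (hQ0 : 0 ≤ Q) (hQ1 : Q < 1) (ha0 : 0 ≤ a) (ha1 : a < 1) :
    |∑' k : ℕ, Real.log (1 - a * Q ^ k)| ≤ a / ((1 - a) * (1 - Q)) := by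
  have hsum : Summable (fun k : ℕ => Q ^ k) := summable_geometric_of_lt_one hQ0 hQ1
  have hg : Summable (fun k : ℕ => a * Q ^ k / (1 - a)) := by
    simpa [mul_div_assoc, mul_comm, div_eq_mul_inv, mul_assoc] using
      (hsum.mul_left (a * (1 - a)⁻¹)).congr (fun k => by ring)
  have habs : Summable (fun k : ℕ => |Real.log (1 - a * Q ^ k)|) :=
    Summable.of_nonneg_of_le (fun k => abs_nonneg _)
      (fun k => log_abs_le hQ0 hQ1.le ha0 ha1 k) hg
  have habs' : Summable (fun k : ℕ => ‖Real.log (1 - a * Q ^ k)‖) := by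
    simpa only [Real.norm_eq_abs] using habs
  have h1 : |∑' k : ℕ, Real.log (1 - a * Q ^ k)| ≤
      ∑' k : ℕ, |Real.log (1 - a * Q ^ k)| := by
    have := norm_tsum_le_tsum_norm habs'
    simpa only [Real.norm_eq_abs] using this
  have h2 : ∑' k : ℕ, |Real.log (1 - a * Q ^ k)| ≤ ∑' k : ℕ, a * Q ^ k / (1 - a) :=
    Summable.tsum_le_tsum (fun k => log_abs_le hQ0 hQ1.le ha0 ha1 k) habs hg
  have h3 : ∑' k : ℕ, a * Q ^ k / (1 - a) = a / ((1 - a) * (1 - Q)) := by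
    have := tsum_geometric_of_lt_one hQ0 hQ1
    calc ∑' k : ℕ, a * Q ^ k / (1 - a)
        = ∑' k : ℕ, (a / (1 - a)) * Q ^ k := by
          apply tsum_congr; intro k; ring
      _ = (a / (1 - a)) * (1 - Q)⁻¹ := by rw [tsum_mul_left, this]
      _ = a / ((1 - a) * (1 - Q)) := by
          rw [div_eq_mul_inv, div_eq_mul_inv, mul_inv, mul_assoc]
  linarith

lemma qPochInf_split (hQ0 : 0 ≤ Q) (hQ1 : Q < 1) (ha0 : 0 ≤ a) (ha1 : a < 1) :
    qPochInf a Q = (1 - a) * qPochInf (a * Q) Q := by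
  have haQ0 : 0 ≤ a * Q := mul_nonneg ha0 hQ0
  have haQ1 : a * Q < 1 := by nlinarith
  have hm : Multipliable (fun k : ℕ => 1 - (a * Q) * Q ^ k) :=
    (hasProd_qPoch hQ0 hQ1 haQ0 haQ1).multipliable
  have hm' : Multipliable (fun n : ℕ => 1 - a * Q ^ (n + 1)) := by
    refine hm.congr (fun k => ?_)
    rw [pow_succ]; ring
  unfold qPochInf
  rw [tprod_eq_zero_mul' hm']
  simp only [pow_zero, mul_one]
  congr 1
  apply tprod_congr
  intro k
  rw [pow_succ]; ring

/-- If `g n → 0` with `0 ≤ g n < 1`, then `qPochInf (g n) Q → 1`. -/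
lemma qPochInf_tendsto_one (hQ0 : 0 ≤ Q) (hQ1 : Q < 1) {g : ℕ → ℝ}
    (hg0 : ∀ n, 0 ≤ g n) (hg1 : ∀ n, g n < 1)
    (hg : Tendsto g atTop (nhds 0)) :
    Tendsto (fun n => qPochInf (g n) Q) atTop (nhds 1) := by
  have hL : Tendsto (fun n => ∑' k : ℕ, Real.log (1 - g n * Q ^ k)) atTop (nhds 0) := by
    apply squeeze_zero_norm (a := fun n => g n / ((1 - g n) * (1 - Q)))
    · intro n
      rw [Real.norm_eq_abs]
      exact tsum_log_abs_le hQ0 hQ1 (hg0 n) (hg1 n)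
    · have h1 : Tendsto (fun n => (1 - g n) * (1 - Q)) atTop (nhds ((1 - 0) * (1 - Q))) :=
        ((tendsto_const_nhds.sub hg).mul tendsto_const_nhds)
      have := hg.div h1 (by norm_num; linarith)
      rw [zero_div] at this
      exact this
  have : Tendsto (fun n => Real.exp (∑' k : ℕ, Real.log (1 - g n * Q ^ k)))
      atTop (nhds (Real.exp 0)) := (Real.continuous_exp.tendsto 0).comp hL
  rw [Real.exp_zero] at this
  refine this.congr (fun n => ?_)
  exact (qPochInf_eq_exp hQ0 hQ1 (hg0 n) (hg1 n)).symm

end Aux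

section QG

variable {q : ℝ}

lemma qG_eq_s13 (hq0 : 0 < q) (hq1 : q < 1) {y : ℝ} (hy : 0 < y) :
    qG q y = Real.sqrt (1 - q) *
      (qPochInf (q ^ (y + 1)) (q ^ 2) / qPochInf (q ^ y) (q ^ 2)) := by
  have hQ0 : (0:ℝ) < q ^ 2 := by positivity
  have hQ1 : q ^ 2 < 1 := by nlinarith
  have h1q : (0:ℝ) < 1 - q := by linarith
  have hD : (0:ℝ) < 1 - q ^ 2 := by nlinarith
  have e1 : ((q:ℝ) ^ 2) ^ (y / 2 : ℝ) = q ^ y := by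
    rw [← Real.rpow_natCast q 2, ← Real.rpow_mul hq0.le]
    congr 1
    push_cast; ring
  have e2 : ((q:ℝ) ^ 2) ^ ((y + 1) / 2 : ℝ) = q ^ (y + 1) := by
    rw [← Real.rpow_natCast q 2, ← Real.rpow_mul hq0.le]
    congr 1
    push_cast; ring
  have hC : 0 < qPochInf (q ^ 2) (q ^ 2) := qPochInf_pos_s13 hQ0.le hQ1 hQ0.le hQ1
  have hqy0 : 0 < q ^ y := Real.rpow_pos_of_pos hq0 y
  have hqy1 : q ^ y < 1 := Real.rpow_lt_one hq0.le hq1 hy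
  have hqy0' : 0 < q ^ (y + 1) := Real.rpow_pos_of_pos hq0 _
  have hqy1' : q ^ (y + 1) < 1 := Real.rpow_lt_one hq0.le hq1 (by linarith)
  have hP0 : 0 < qPochInf (q ^ y) (q ^ 2) := qPochInf_pos_s13 hQ0.le hQ1 hqy0.le hqy1
  have hP1 : 0 < qPochInf (q ^ (y + 1)) (q ^ 2) := qPochInf_pos_s13 hQ0.le hQ1 hqy0'.le hqy1'
  have hsq : (0:ℝ) < 1 + q := by linarith
  have hs1 : 0 < Real.sqrt (1 + q) := Real.sqrt_pos.mpr hsq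
  have hrpow2 : (0:ℝ) < (1 - q ^ 2) ^ (1 - (y + 1) / 2 : ℝ) := Real.rpow_pos_of_pos hD _
  unfold qG qGamma
  rw [e1, e2]
  have hkey : (1 - q ^ 2) ^ (1 - y / 2 : ℝ)
      = (1 - q ^ 2) ^ (1 - (y + 1) / 2 : ℝ) * (Real.sqrt (1 - q) * Real.sqrt (1 + q)) := by
    have h12 : (1 - y / 2 : ℝ) = (1 - (y + 1) / 2) + 1 / 2 := by ring
    rw [h12, Real.rpow_add hD]
    congr 1
    rw [← Real.sqrt_eq_rpow, ← Real.sqrt_mul h1q.le]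
    congr 1
    ring
  rw [hkey]
  field_simp

lemma qG_pos (hq0 : 0 < q) (hq1 : q < 1) {y : ℝ} (hy : 0 < y) : 0 < qG q y := by
  have hQ0 : (0:ℝ) < q ^ 2 := by positivity
  have hQ1 : q ^ 2 < 1 := by nlinarith
  have h1q : (0:ℝ) < 1 - q := by linarith
  have hqy0 : 0 < q ^ y := Real.rpow_pos_of_pos hq0 y
  have hqy1 : q ^ y < 1 := Real.rpow_lt_one hq0.le hq1 hy
  have hqy0' : 0 < q ^ (y + 1) := Real.rpow_pos_of_pos hq0 _
  have hqy1' : q ^ (y + 1) < 1 := Real.rpow_lt_one hq0.le hq1 (by linarith)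
  have hP0 : 0 < qPochInf (q ^ y) (q ^ 2) := qPochInf_pos_s13 hQ0.le hQ1 hqy0.le hqy1
  have hP1 : 0 < qPochInf (q ^ (y + 1)) (q ^ 2) := qPochInf_pos_s13 hQ0.le hQ1 hqy0'.le hqy1'
  rw [qG_eq_s13 hq0 hq1 hy]
  exact mul_pos (Real.sqrt_pos.mpr h1q) (div_pos hP1 hP0)

lemma qBracket_pos (hq0 : 0 < q) (hq1 : q < 1) {y : ℝ} (hy : 0 < y) :
    0 < qBracket q y := by
  have hqy1 : q ^ y < 1 := Real.rpow_lt_one hq0.le hq1 hy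
  exact div_pos (by linarith) (by linarith)

lemma qBracket_lt (hq0 : 0 < q) (hq1 : q < 1) {y : ℝ} (hy : 0 < y) :
    qBracket q y < qBracket q (y + 1) := by
  have h : q ^ (y + 1) < q ^ y :=
    Real.rpow_lt_rpow_of_exponent_gt hq0 hq1 (by linarith)
  unfold qBracket
  apply div_lt_div_of_pos_right (by linarith) (by linarith)

lemma qG_funeq (hq0 : 0 < q) (hq1 : q < 1) {y : ℝ} (hy : 0 < y) :
    qG q y * qG q (y + 1) = 1 / qBracket q y := by
  have hQ0 : (0:ℝ) < q ^ 2 := by positivity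
  have hQ1 : q ^ 2 < 1 := by nlinarith
  have h1q : (0:ℝ) < 1 - q := by linarith
  have hqy0 : 0 < q ^ y := Real.rpow_pos_of_pos hq0 y
  have hqy1 : q ^ y < 1 := Real.rpow_lt_one hq0.le hq1 hy
  have hqy0' : 0 < q ^ (y + 1) := Real.rpow_pos_of_pos hq0 _
  have hqy1' : q ^ (y + 1) < 1 := Real.rpow_lt_one hq0.le hq1 (by linarith)
  have hqy0'' : 0 < q ^ (y + 2) := Real.rpow_pos_of_pos hq0 _
  have hqy1'' : q ^ (y + 2) < 1 := Real.rpow_lt_one hq0.le hq1 (by linarith)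
  have hP0 : 0 < qPochInf (q ^ y) (q ^ 2) := qPochInf_pos_s13 hQ0.le hQ1 hqy0.le hqy1
  have hP1 : 0 < qPochInf (q ^ (y + 1)) (q ^ 2) := qPochInf_pos_s13 hQ0.le hQ1 hqy0'.le hqy1'
  have hP2 : 0 < qPochInf (q ^ (y + 2)) (q ^ 2) := qPochInf_pos_s13 hQ0.le hQ1 hqy0''.le hqy1''
  have hsplit : qPochInf (q ^ y) (q ^ 2) = (1 - q ^ y) * qPochInf (q ^ (y + 2)) (q ^ 2) := by
    have h := qPochInf_split hQ0.le hQ1 hqy0.le hqy1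
    rw [h]
    congr 2
    rw [Real.rpow_add hq0]
    congr 1
    rw [show ((2:ℝ)) = ((2:ℕ):ℝ) by norm_num, Real.rpow_natCast]
  rw [qG_eq_s13 hq0 hq1 hy, qG_eq_s13 hq0 hq1 (by linarith : (0:ℝ) < y + 1),
    show (y + 1 + 1 : ℝ) = y + 2 by ring]
  have hss : Real.sqrt (1 - q) * Real.sqrt (1 - q) = 1 - q := Real.mul_self_sqrt h1q.le
  calc Real.sqrt (1 - q) * (qPochInf (q ^ (y + 1)) (q ^ 2) / qPochInf (q ^ y) (q ^ 2)) *
        (Real.sqrt (1 - q) * (qPochInf (q ^ (y + 2)) (q ^ 2) / qPochInf (q ^ (y + 1)) (q ^ 2)))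
      = (Real.sqrt (1 - q) * Real.sqrt (1 - q)) *
        ((qPochInf (q ^ (y + 2)) (q ^ 2) / qPochInf (q ^ y) (q ^ 2)) *
         (qPochInf (q ^ (y + 1)) (q ^ 2) / qPochInf (q ^ (y + 1)) (q ^ 2))) := by ring
    _ = (1 - q) * (qPochInf (q ^ (y + 2)) (q ^ 2) / qPochInf (q ^ y) (q ^ 2)) := by
        rw [hss, div_self hP1.ne', mul_one]
    _ = (1 - q) / (1 - q ^ y) := by
        rw [hsplit, div_mul_eq_div_div_swap, div_self hP2.ne', mul_one_div]
    _ = 1 / qBracket q y := by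
        unfold qBracket
        rw [one_div_div]

lemma qG_two_step (hq0 : 0 < q) (hq1 : q < 1) {y : ℝ} (hy : 0 < y) :
    qG q (y + 2) < qG q y := by
  have f1 := qG_funeq hq0 hq1 hy
  have f2 := qG_funeq hq0 hq1 (by linarith : (0:ℝ) < y + 1)
  rw [show (y + 1 + 1 : ℝ) = y + 2 by ring] at f2
  have hB := qBracket_pos hq0 hq1 hy
  have hBlt := qBracket_lt hq0 hq1 hy
  have hg1 := qG_pos hq0 hq1 (by linarith : (0:ℝ) < y + 1)
  have h : 1 / qBracket q (y + 1) < 1 / qBracket q y :=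
    one_div_lt_one_div_of_lt hB hBlt
  have h2 : qG q (y + 1) * qG q (y + 2) < qG q (y + 1) * qG q y := by
    rw [f2, mul_comm, f1]
    exact h
  exact (mul_lt_mul_iff_right₀ hg1).mp h2

lemma qG_tendsto (hq0 : 0 < q) (hq1 : q < 1) {c : ℝ} (hc : 0 < c) :
    Tendsto (fun n : ℕ => qG q (c + 2 * (n:ℝ))) atTop (nhds (Real.sqrt (1 - q))) := by
  have hQ0 : (0:ℝ) < q ^ 2 := by positivity
  have hQ1 : q ^ 2 < 1 := by nlinarith
  have hgeom : Tendsto (fun n : ℕ => ((q:ℝ) ^ 2) ^ n) atTop (nhds 0) :=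
    tendsto_pow_atTop_nhds_zero_of_lt_one hQ0.le hQ1
  have hbase : ∀ c' : ℝ, Tendsto (fun n : ℕ => q ^ (c' + 2 * (n:ℝ))) atTop (nhds 0) := by
    intro c'
    have he : ∀ n : ℕ, q ^ (c' + 2 * (n:ℝ)) = q ^ c' * ((q:ℝ) ^ 2) ^ n := by
      intro n
      rw [Real.rpow_add hq0]
      congr 1
      rw [show (2 * (n:ℝ)) = (((2 * n : ℕ)):ℝ) by push_cast; ring, Real.rpow_natCast, pow_mul]
    have h := hgeom.const_mul (q ^ c' : ℝ)
    rw [mul_zero] at h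
    exact h.congr (fun n => (he n).symm)
  have hP : ∀ c' : ℝ, 0 < c' →
      Tendsto (fun n : ℕ => qPochInf (q ^ (c' + 2 * (n:ℝ))) (q ^ 2)) atTop (nhds 1) := by
    intro c' hc'
    apply qPochInf_tendsto_one hQ0.le hQ1
    · intro n
      exact (Real.rpow_pos_of_pos hq0 _).le
    · intro n
      apply Real.rpow_lt_one hq0.le hq1
      positivity
    · exact hbase c'
  have hP0 := hP c hc
  have hP1 := hP (c + 1) (by linarith)
  have hP1' : Tendsto (fun n : ℕ => qPochInf (q ^ ((c + 2 * (n:ℝ)) + 1)) (q ^ 2))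
      atTop (nhds 1) := by
    refine hP1.congr (fun n => ?_)
    rw [show (c + 1 + 2 * (n:ℝ)) = (c + 2 * (n:ℝ)) + 1 by ring]
  have hd : Tendsto (fun n : ℕ => Real.sqrt (1 - q) *
      (qPochInf (q ^ ((c + 2 * (n:ℝ)) + 1)) (q ^ 2) /
       qPochInf (q ^ (c + 2 * (n:ℝ))) (q ^ 2))) atTop
      (nhds (Real.sqrt (1 - q) * (1 / 1))) :=
    tendsto_const_nhds.mul (hP1'.div hP0 one_ne_zero)
  rw [show (Real.sqrt (1 - q) * ((1:ℝ) / 1)) = Real.sqrt (1 - q) by norm_num] at hd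
  refine hd.congr (fun n => ?_)
  exact (qG_eq_s13 hq0 hq1 (by positivity : (0:ℝ) < c + 2 * (n:ℝ))).symm

end QG

theorem stmt13 (q k : ℝ) (hq0 : 0 < q) (hq1 : q < 1) (hk : 0 < k)
    (f : ℝ → ℝ)
    (hfe : ∀ x > 0, 1 / f (x + 1) = qBracket q x ^ k * f x)
    (hf1 : f 1 = 1)
    (hnz : ∀ x > 0, f x ≠ 0)
    (M : ℝ) (hM : 0 ≤ M) (hdec : ∀ x > M, f (x + 1) ≤ f x) :
    ∀ x > 0, f x = qG q x ^ k := by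
  intro x hx
  have h1q : (0:ℝ) < 1 - q := by linarith
  have hGk_pos : ∀ y : ℝ, 0 < y → 0 < qG q y ^ k :=
    fun y hy => Real.rpow_pos_of_pos (qG_pos hq0 hq1 hy) k
  set c : ℝ := f x / qG q x ^ k with hc
  have hcne : c ≠ 0 := div_ne_zero (hnz x hx) (hGk_pos x hx).ne'
  -- step lemma
  have step : ∀ y : ℝ, 0 < y → ∀ d : ℝ, d ≠ 0 → f y = d * qG q y ^ k →
      f (y + 1) = d⁻¹ * qG q (y + 1) ^ k := by
    intro y hy d hd hfy
    have hGy := qG_pos hq0 hq1 hy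
    have hBy := qBracket_pos hq0 hq1 hy
    have funeq := qG_funeq hq0 hq1 hy
    have hG1 : qG q (y + 1) = (qBracket q y * qG q y)⁻¹ := by
      have h : (qBracket q y * qG q y) * qG q (y + 1) = 1 := by
        rw [mul_assoc, funeq, mul_one_div,
          div_self hBy.ne']
      exact eq_inv_of_mul_eq_one_right h
    have hG1k : qG q (y + 1) ^ k = (qBracket q y ^ k * qG q y ^ k)⁻¹ := by
      rw [hG1, Real.inv_rpow (by positivity : (0:ℝ) ≤ qBracket q y * qG q y),
        Real.mul_rpow hBy.le hGy.le]
    have hfe' := hfe y hy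
    have hfy1 : f (y + 1) = (qBracket q y ^ k * f y)⁻¹ := by
      rw [← hfe', one_div, inv_inv]
    rw [hfy1, hfy, hG1k]
    field_simp
  -- induction along steps of 2
  have key : ∀ n : ℕ, f (x + 2 * n) = c * qG q (x + 2 * n) ^ k ∧
      f (x + 2 * n + 1) = c⁻¹ * qG q (x + 2 * n + 1) ^ k := by
    intro n
    induction n with
    | zero =>
      have e : x + 2 * ((0:ℕ):ℝ) = x := by push_cast; ring
      constructor
      · rw [e, hc, div_mul_cancel₀ _ (hGk_pos x hx).ne']
      · rw [e]
        exact step x hx c hcne (by rw [hc, div_mul_cancel₀ _ (hGk_pos x hx).ne'])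
    | succ n ih =>
      have hpos1 : (0:ℝ) < x + 2 * n + 1 := by positivity
      have h1 : f (x + 2 * n + 1 + 1) = (c⁻¹)⁻¹ * qG q (x + 2 * n + 1 + 1) ^ k :=
        step (x + 2 * n + 1) hpos1 c⁻¹ (inv_ne_zero hcne) ih.2
      have e : x + 2 * ((n + 1 : ℕ):ℝ) = x + 2 * n + 1 + 1 := by push_cast; ring
      have h1' : f (x + 2 * ((n + 1 : ℕ):ℝ)) = c * qG q (x + 2 * ((n + 1 : ℕ):ℝ)) ^ k := by
        rw [e, h1, inv_inv]
      refine ⟨h1', ?_⟩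
      exact step _ (by positivity) c hcne h1'
  -- tendsto facts
  have hs0 : Real.sqrt (1 - q) ≠ 0 := (Real.sqrt_pos.mpr h1q).ne'
  have t0 : Tendsto (fun n : ℕ => qG q (x + 2 * (n:ℝ))) atTop (nhds (Real.sqrt (1 - q))) :=
    qG_tendsto hq0 hq1 hx
  have t1 : Tendsto (fun n : ℕ => qG q (x + 2 * (n:ℝ) + 1)) atTop
      (nhds (Real.sqrt (1 - q))) := by
    refine (qG_tendsto hq0 hq1 (by linarith : (0:ℝ) < x + 1)).congr (fun n => ?_)
    rw [show (x + 1 + 2 * (n:ℝ)) = x + 2 * (n:ℝ) + 1 by ring]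
  have t2 : Tendsto (fun n : ℕ => qG q (x + 2 * (n:ℝ) + 2)) atTop
      (nhds (Real.sqrt (1 - q))) := by
    refine (qG_tendsto hq0 hq1 (by linarith : (0:ℝ) < x + 2)).congr (fun n => ?_)
    rw [show (x + 2 + 2 * (n:ℝ)) = x + 2 * (n:ℝ) + 2 by ring]
  have hu_lim : Tendsto (fun n : ℕ =>
      qG q (x + 2 * (n:ℝ) + 1) ^ k / qG q (x + 2 * (n:ℝ)) ^ k) atTop (nhds 1) := by
    have hr0 := t1.div t0 hs0
    rw [div_self hs0] at hr0
    have hr := hr0.rpow_const (p := k) (Or.inl one_ne_zero)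
    rw [Real.one_rpow] at hr
    refine hr.congr (fun n => ?_)
    simp only [Pi.div_apply]
    rw [Real.div_rpow (qG_pos hq0 hq1 (by positivity)).le
      (qG_pos hq0 hq1 (by positivity)).le]
  have hv_lim : Tendsto (fun n : ℕ =>
      qG q (x + 2 * (n:ℝ) + 1) ^ k / qG q (x + 2 * (n:ℝ) + 2) ^ k) atTop (nhds 1) := by
    have hr0 := t1.div t2 hs0
    rw [div_self hs0] at hr0
    have hr := hr0.rpow_const (p := k) (Or.inl one_ne_zero)
    rw [Real.one_rpow] at hr
    refine hr.congr (fun n => ?_)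
    simp only [Pi.div_apply]
    rw [Real.div_rpow (qG_pos hq0 hq1 (by positivity)).le
      (qG_pos hq0 hq1 (by positivity)).le]
  -- pick N with x + 2n > M for n >= N
  obtain ⟨N, hN⟩ := exists_nat_gt M
  have hNM : ∀ n : ℕ, N ≤ n → x + 2 * (n:ℝ) > M := by
    intro n hn
    have h1 : (N:ℝ) ≤ (n:ℝ) := Nat.cast_le.mpr hn
    have h2 : (0:ℝ) ≤ (n:ℝ) := Nat.cast_nonneg n
    linarith
  -- the two decrease inequalities
  have hi : ∀ n : ℕ, N ≤ n →
      c⁻¹ * qG q (x + 2 * (n:ℝ) + 1) ^ k ≤ c * qG q (x + 2 * (n:ℝ)) ^ k := by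
    intro n hn
    have h := hdec (x + 2 * (n:ℝ)) (hNM n hn)
    rw [(key n).1, (key n).2] at h
    exact h
  have hii : ∀ n : ℕ, N ≤ n →
      c * qG q (x + 2 * (n:ℝ) + 2) ^ k ≤ c⁻¹ * qG q (x + 2 * (n:ℝ) + 1) ^ k := by
    intro n hn
    have h := hdec (x + 2 * (n:ℝ) + 1) (by have := hNM n hn; linarith)
    have e2 : x + 2 * ((n + 1 : ℕ):ℝ) = x + 2 * (n:ℝ) + 2 := by push_cast; ring
    have h2 := (key (n + 1)).1
    rw [e2] at h2
    rw [(key n).2] at h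
    rw [show x + 2 * (n:ℝ) + 1 + 1 = x + 2 * (n:ℝ) + 2 by ring] at h
    rw [h2] at h
    exact h
  -- positivity of the three sequences
  have hA : ∀ n : ℕ, 0 < qG q (x + 2 * (n:ℝ)) ^ k := fun n => hGk_pos _ (by positivity)
  have hB : ∀ n : ℕ, 0 < qG q (x + 2 * (n:ℝ) + 1) ^ k := fun n => hGk_pos _ (by positivity)
  have hC : ∀ n : ℕ, 0 < qG q (x + 2 * (n:ℝ) + 2) ^ k := fun n => hGk_pos _ (by positivity)
  have hinv : c * c⁻¹ = 1 := mul_inv_cancel₀ hcne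
  -- case analysis on sign of c
  rcases hcne.lt_or_gt with hneg | hpos
  · -- c < 0 : derive c = -1 then contradiction
    exfalso
    have hcsq_le : c ^ 2 ≤ 1 := by
      refine ge_of_tendsto hu_lim ?_
      refine eventually_atTop.mpr ⟨N, fun n hn => ?_⟩
      have h := hi n hn
      have hAn := hA n; have hBn := hB n
      rw [le_div_iff₀ hAn]
      have h3 := mul_le_mul_of_nonpos_left h hneg.le
      have h4 : c * (c⁻¹ * qG q (x + 2 * (n:ℝ) + 1) ^ k) = qG q (x + 2 * (n:ℝ) + 1) ^ k := by
        rw [← mul_assoc, hinv, one_mul]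
      calc c ^ 2 * qG q (x + 2 * (n:ℝ)) ^ k = c * (c * qG q (x + 2 * (n:ℝ)) ^ k) := by ring
        _ ≤ c * (c⁻¹ * qG q (x + 2 * (n:ℝ) + 1) ^ k) := h3
        _ = qG q (x + 2 * (n:ℝ) + 1) ^ k := h4
    have hcsq_ge : 1 ≤ c ^ 2 := by
      refine le_of_tendsto hv_lim ?_
      refine eventually_atTop.mpr ⟨N, fun n hn => ?_⟩
      have h := hii n hn
      have hBn := hB n; have hCn := hC n
      rw [div_le_iff₀ hCn]
      have h3 := mul_le_mul_of_nonpos_left h hneg.le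
      have h4 : c * (c⁻¹ * qG q (x + 2 * (n:ℝ) + 1) ^ k) = qG q (x + 2 * (n:ℝ) + 1) ^ k := by
        rw [← mul_assoc, hinv, one_mul]
      calc qG q (x + 2 * (n:ℝ) + 1) ^ k = c * (c⁻¹ * qG q (x + 2 * (n:ℝ) + 1) ^ k) := h4.symm
        _ ≤ c * (c * qG q (x + 2 * (n:ℝ) + 2) ^ k) := h3
        _ = c ^ 2 * qG q (x + 2 * (n:ℝ) + 2) ^ k := by ring
    have hc1 : c = -1 := by nlinarith
    have hmini : ((-1:ℝ))⁻¹ = -1 := by norm_num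
    have hAB : qG q (x + 2 * (N:ℝ)) ^ k ≤ qG q (x + 2 * (N:ℝ) + 1) ^ k := by
      have h := hi N le_rfl
      rw [hc1, hmini] at h
      linarith
    have hBC : qG q (x + 2 * (N:ℝ) + 1) ^ k ≤ qG q (x + 2 * (N:ℝ) + 2) ^ k := by
      have h := hii N le_rfl
      rw [hc1, hmini] at h
      linarith
    have hAC : qG q (x + 2 * (N:ℝ)) ≤ qG q (x + 2 * (N:ℝ) + 2) :=
      (Real.rpow_le_rpow_iff (qG_pos hq0 hq1 (by positivity)).le
        (qG_pos hq0 hq1 (by positivity)).le hk).mp (le_trans hAB hBC)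
    have := qG_two_step hq0 hq1 (by positivity : (0:ℝ) < x + 2 * (N:ℝ))
    linarith
  · -- c > 0 : show c = 1
    have hcsq_ge : 1 ≤ c ^ 2 := by
      refine le_of_tendsto hu_lim ?_
      refine eventually_atTop.mpr ⟨N, fun n hn => ?_⟩
      have h := hi n hn
      have hAn := hA n; have hBn := hB n
      rw [div_le_iff₀ hAn]
      have h3 := mul_le_mul_of_nonneg_left h hpos.le
      have h4 : c * (c⁻¹ * qG q (x + 2 * (n:ℝ) + 1) ^ k) = qG q (x + 2 * (n:ℝ) + 1) ^ k := by
        rw [← mul_assoc, hinv, one_mul]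
      calc qG q (x + 2 * (n:ℝ) + 1) ^ k = c * (c⁻¹ * qG q (x + 2 * (n:ℝ) + 1) ^ k) := h4.symm
        _ ≤ c * (c * qG q (x + 2 * (n:ℝ)) ^ k) := h3
        _ = c ^ 2 * qG q (x + 2 * (n:ℝ)) ^ k := by ring
    have hcsq_le : c ^ 2 ≤ 1 := by
      refine ge_of_tendsto hv_lim ?_
      refine eventually_atTop.mpr ⟨N, fun n hn => ?_⟩
      have h := hii n hn
      have hBn := hB n; have hCn := hC n
      rw [le_div_iff₀ hCn]
      have h3 := mul_le_mul_of_nonneg_left h hpos.le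
      have h4 : c * (c⁻¹ * qG q (x + 2 * (n:ℝ) + 1) ^ k) = qG q (x + 2 * (n:ℝ) + 1) ^ k := by
        rw [← mul_assoc, hinv, one_mul]
      calc c ^ 2 * qG q (x + 2 * (n:ℝ) + 2) ^ k = c * (c * qG q (x + 2 * (n:ℝ) + 2) ^ k) := by
            ring
        _ ≤ c * (c⁻¹ * qG q (x + 2 * (n:ℝ) + 1) ^ k) := h3
        _ = qG q (x + 2 * (n:ℝ) + 1) ^ k := h4
    have hc1 : c = 1 := by nlinarith
    have base := (key 0).1
    rw [show x + 2 * ((0:ℕ):ℝ) = x by push_cast; ring] at base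
    rw [hc1, one_mul] at base
    exact base
end

section
/- Let φ(x;q) be a continuous function defined for x≥0 and q∈[0,1] such that: (1) for each fixed q, φ(·;q) is positive and periodic with period 1; (2) φ has continuous partial derivatives in x up to order 2 on [0,1]×[0,1]. Let m≥2 be an integer and suppose that for some function c(q)>0 one has φ(x;q)·φ(x+1/m;q)⋯φ(x+(m−1)/m;q) = c(q)·φ(mx;q^{1/m}) for all x≥0 and q∈[0,1]. Then for each fixed q∈[0,1], x ↦ φ(x;q) is constant on ℝ. -/
open Real Set Filter
open scoped Topology

theorem stmt15 (φ : ℝ → ℝ → ℝ)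
    -- φ(x;q) is continuous for x ≥ 0 and q ∈ [0,1]
    (hcont : ContinuousOn (fun p : ℝ × ℝ => φ p.1 p.2) (Ici 0 ×ˢ Icc 0 1))
    -- for each fixed q, φ(·;q) is positive and periodic with period 1
    (hpos : ∀ q ∈ Icc (0 : ℝ) 1, ∀ x ≥ (0 : ℝ), 0 < φ x q)
    (hper : ∀ q ∈ Icc (0 : ℝ) 1, ∀ x ≥ (0 : ℝ), φ (x + 1) q = φ x q)
    -- φ has continuous partial derivatives in x up to order 2 on [0,1]×[0,1]
    (hC2 : ∀ q ∈ Icc (0 : ℝ) 1, ContDiffOn ℝ 2 (fun x => φ x q) (Icc 0 1))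
    (hC2' : ∀ n : ℕ, n ≤ 2 → ContinuousOn
      (fun p : ℝ × ℝ => iteratedDerivWithin n (fun x => φ x p.2) (Icc 0 1) p.1)
      (Icc 0 1 ×ˢ Icc 0 1))
    (m : ℕ) (hm : 2 ≤ m) (c : ℝ → ℝ) (hc : ∀ q ∈ Icc (0 : ℝ) 1, 0 < c q)
    -- the multiplicative functional equation
    (hfe : ∀ q ∈ Icc (0 : ℝ) 1, ∀ x ≥ (0 : ℝ),
      (∏ i ∈ Finset.range m, φ (x + (i : ℝ) / (m : ℝ)) q) =
        c q * φ ((m : ℝ) * x) (q ^ ((1 : ℝ) / (m : ℝ)))) :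
    ∀ q ∈ Icc (0 : ℝ) 1, ∀ x ≥ (0 : ℝ), ∀ y ≥ (0 : ℝ), φ x q = φ y q := by
  classical
  have hm0 : (0:ℝ) < (m:ℝ) := by
    have : 0 < m := lt_of_lt_of_le two_pos hm
    exact_mod_cast this
  have hm1 : (1:ℝ) < (m:ℝ) := by exact_mod_cast lt_of_lt_of_le one_lt_two hm
  have hmne : (m:ℝ) ≠ 0 := ne_of_gt hm0
  set L : ℝ → ℝ → ℝ := fun q y => Real.log (φ y q) with hLdef
  set D1 : ℝ → ℝ → ℝ := fun q => deriv (L q) with hD1def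
  set D2 : ℝ → ℝ → ℝ := fun q => deriv (D1 q) with hD2def
  -- compactness bounds
  have hKc : IsCompact (Icc (0:ℝ) 1 ×ˢ Icc (0:ℝ) 1) := isCompact_Icc.prod isCompact_Icc
  obtain ⟨p0, hp0K, hp0min⟩ := hKc.exists_isMinOn ⟨((0:ℝ),(0:ℝ)),
      Set.mk_mem_prod ⟨le_rfl, zero_le_one⟩ ⟨le_rfl, zero_le_one⟩⟩
    (hcont.mono (Set.prod_mono_left Icc_subset_Ici_self))
  set δ : ℝ := φ p0.1 p0.2 with hδdef
  have hδpos : 0 < δ := hpos p0.2 hp0K.2 p0.1 hp0K.1.1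
  have hδle : ∀ q ∈ Icc (0:ℝ) 1, ∀ x ∈ Icc (0:ℝ) 1, δ ≤ φ x q := fun q hq x hx =>
    hp0min (Set.mk_mem_prod hx hq)
  obtain ⟨M0, hM0⟩ := hKc.exists_bound_of_continuousOn (hC2' 0 (by norm_num))
  obtain ⟨M1, hM1⟩ := hKc.exists_bound_of_continuousOn (hC2' 1 (by norm_num))
  obtain ⟨M2, hM2⟩ := hKc.exists_bound_of_continuousOn (hC2' 2 le_rfl)
  set C : ℝ := (M2 * M0 + M1 * M1) / δ^2 with hCdef
  have hUD : UniqueDiffOn ℝ (Icc (0:ℝ) 1) := uniqueDiffOn_Icc zero_lt_one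
  have hIoosub : Ioo (0:ℝ) 1 ⊆ Icc (0:ℝ) 1 := Ioo_subset_Icc_self
  have hderiv1 : ∀ q ∈ Icc (0:ℝ) 1, ∀ y ∈ Ioo (0:ℝ) 1,
      iteratedDerivWithin 1 (fun t => φ t q) (Icc 0 1) y = deriv (fun t => φ t q) y := by
    intro q hq y hy
    rw [iteratedDerivWithin_one,
      derivWithin_of_mem_nhds (Icc_mem_nhds hy.1 hy.2)]
  have hderiv2 : ∀ q ∈ Icc (0:ℝ) 1, ∀ y ∈ Ioo (0:ℝ) 1,
      iteratedDerivWithin 2 (fun t => φ t q) (Icc 0 1) y = deriv (deriv (fun t => φ t q)) y := by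
    intro q hq y hy
    rw [show (2:ℕ) = 1 + 1 from rfl, iteratedDerivWithin_succ,
      derivWithin_of_mem_nhds (Icc_mem_nhds hy.1 hy.2)]
    apply Filter.EventuallyEq.deriv_eq
    filter_upwards [Ioo_mem_nhds hy.1 hy.2] with z hz using hderiv1 q hq z hz
  -- key derivative facts and uniform bound
  have key : ∀ q ∈ Icc (0:ℝ) 1, ∀ x ∈ Ioo (0:ℝ) 1,
      HasDerivAt (L q) (D1 q x) x ∧ HasDerivAt (D1 q) (D2 q x) x ∧ |D2 q x| ≤ C := by
    intro q hq x hx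
    have hxI : Icc (0:ℝ) 1 ∈ 𝓝 x := Icc_mem_nhds hx.1 hx.2
    have cd : ContDiffAt ℝ 2 (fun t => φ t q) x := (hC2 q hq).contDiffAt hxI
    obtain ⟨u, hu, hcu⟩ := cd.contDiffOn le_rfl (by norm_num)
    have hwo : IsOpen (interior u ∩ Ioo (0:ℝ) 1) := isOpen_interior.inter isOpen_Ioo
    have hxw : x ∈ interior u ∩ Ioo (0:ℝ) 1 := ⟨mem_interior_iff_mem_nhds.2 hu, hx⟩
    have hcw : ContDiffOn ℝ 2 (fun t => φ t q) (interior u ∩ Ioo (0:ℝ) 1) :=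
      hcu.mono (inter_subset_left.trans interior_subset)
    have hfd : ∀ y ∈ interior u ∩ Ioo (0:ℝ) 1, DifferentiableAt ℝ (fun t => φ t q) y :=
      fun y hy => (hcw.contDiffAt (hwo.mem_nhds hy)).differentiableAt (by norm_num)
    have hd1d : DifferentiableAt ℝ (deriv (fun t => φ t q)) x :=
      (((hcw.deriv_of_isOpen (m := 1) hwo (by norm_num)).contDiffAt
        (hwo.mem_nhds hxw)).differentiableAt (by norm_num))
    have hLd : ∀ y ∈ interior u ∩ Ioo (0:ℝ) 1,
        HasDerivAt (L q) (deriv (fun t => φ t q) y / φ y q) y := by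
      intro y hy
      have hy0 : 0 < φ y q := hpos q hq y hy.2.1.le
      have h := (Real.hasDerivAt_log hy0.ne').comp y (hfd y hy).hasDerivAt
      simpa [hLdef, Function.comp_def, div_eq_inv_mul] using h
    have hD1eq : ∀ y ∈ interior u ∩ Ioo (0:ℝ) 1,
        D1 q y = deriv (fun t => φ t q) y / φ y q := by
      intro y hy
      simp only [hD1def]
      exact (hLd y hy).deriv
    have hkey1 : HasDerivAt (L q) (D1 q x) x := (hD1eq x hxw) ▸ hLd x hxw
    have hg : HasDerivAt (fun y => deriv (fun t => φ t q) y / φ y q)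
        ((deriv (deriv (fun t => φ t q)) x * φ x q -
          deriv (fun t => φ t q) x * deriv (fun t => φ t q) x) / (φ x q)^2) x :=
      hd1d.hasDerivAt.div (hfd x hxw).hasDerivAt (hpos q hq x hx.1.le).ne'
    have heq2 : D1 q =ᶠ[𝓝 x] fun y => deriv (fun t => φ t q) y / φ y q := by
      filter_upwards [hwo.mem_nhds hxw] with y hy using hD1eq y hy
    have hkey2' := hg.congr_of_eventuallyEq heq2
    have hD2val : D2 q x = (deriv (deriv (fun t => φ t q)) x * φ x q -
        deriv (fun t => φ t q) x * deriv (fun t => φ t q) x) / (φ x q)^2 := by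
      simp only [hD2def]
      exact hkey2'.deriv
    refine ⟨hkey1, hD2val ▸ hkey2', ?_⟩
    rw [hD2val]
    have hmem : (x, q) ∈ Icc (0:ℝ) 1 ×ˢ Icc (0:ℝ) 1 := Set.mk_mem_prod (hIoosub hx) hq
    have hb0 : |φ x q| ≤ M0 := by
      have := hM0 (x, q) hmem
      simpa [Real.norm_eq_abs, iteratedDerivWithin_zero] using this
    have hb1 : |deriv (fun t => φ t q) x| ≤ M1 := by
      have := hM1 (x, q) hmem
      rw [Real.norm_eq_abs] at this
      rwa [hderiv1 q hq x hx] at this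
    have hb2 : |deriv (deriv (fun t => φ t q)) x| ≤ M2 := by
      have := hM2 (x, q) hmem
      rw [Real.norm_eq_abs] at this
      rwa [hderiv2 q hq x hx] at this
    have hφx : δ ≤ φ x q := hδle q hq x (hIoosub hx)
    have hnum : |deriv (deriv (fun t => φ t q)) x * φ x q -
        deriv (fun t => φ t q) x * deriv (fun t => φ t q) x| ≤ M2 * M0 + M1 * M1 := by
      refine (abs_sub _ _).trans ?_
      rw [abs_mul, abs_mul]
      have h1 : |deriv (deriv (fun t => φ t q)) x| * |φ x q| ≤ M2 * M0 :=
        mul_le_mul hb2 hb0 (abs_nonneg _) ((abs_nonneg _).trans hb2)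
      have h2 : |deriv (fun t => φ t q) x| * |deriv (fun t => φ t q) x| ≤ M1 * M1 :=
        mul_le_mul hb1 hb1 (abs_nonneg _) ((abs_nonneg _).trans hb1)
      linarith
    have hden : δ^2 ≤ (φ x q)^2 := pow_le_pow_left₀ hδpos.le hφx 2
    rw [hCdef, abs_div, abs_of_nonneg (by positivity : (0:ℝ) ≤ (φ x q)^2)]
    exact div_le_div₀ ((abs_nonneg _).trans hnum) hnum (pow_pos hδpos 2) hden
  -- membership helpers
  have hpts : ∀ x ∈ Ioo (0:ℝ) (1/(m:ℝ)), ∀ i ∈ Finset.range m,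
      x + (i:ℝ)/(m:ℝ) ∈ Ioo (0:ℝ) 1 := by
    intro x hx i hi
    have him : (i:ℝ) ≤ (m:ℝ) - 1 := by
      have : (i:ℝ) + 1 ≤ (m:ℝ) := by exact_mod_cast Finset.mem_range.1 hi
      linarith
    have hinn : (0:ℝ) ≤ (i:ℝ)/(m:ℝ) := by positivity
    constructor
    · linarith [hx.1]
    · have h1 : (i:ℝ)/(m:ℝ) ≤ ((m:ℝ)-1)/(m:ℝ) := by gcongr
      have h2 : (1:ℝ)/(m:ℝ) + ((m:ℝ)-1)/(m:ℝ) = 1 := by field_simp; ring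
      linarith [hx.2]
  have hmxmem : ∀ x ∈ Ioo (0:ℝ) (1/(m:ℝ)), (m:ℝ)*x ∈ Ioo (0:ℝ) 1 := by
    intro x hx
    constructor
    · exact mul_pos hm0 hx.1
    · have := hx.2
      calc (m:ℝ)*x < (m:ℝ)*((1:ℝ)/(m:ℝ)) := by
            exact (mul_lt_mul_iff_right₀ hm0).2 this
        _ = 1 := by field_simp
  have hqpow : ∀ q ∈ Icc (0:ℝ) 1, q ^ ((1:ℝ)/(m:ℝ)) ∈ Icc (0:ℝ) 1 := fun q hq =>
    ⟨Real.rpow_nonneg hq.1 _, Real.rpow_le_one hq.1 hq.2 (by positivity)⟩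
  -- log form of the functional equation
  have E0 : ∀ q ∈ Icc (0:ℝ) 1, ∀ x ∈ Ioo (0:ℝ) (1/(m:ℝ)),
      (∑ i ∈ Finset.range m, L q (x + (i:ℝ)/(m:ℝ))) =
        Real.log (c q) + L (q ^ ((1:ℝ)/(m:ℝ))) ((m:ℝ)*x) := by
    intro q hq x hx
    have h := hfe q hq x hx.1.le
    have hne : ∀ i ∈ Finset.range m, φ (x + (i:ℝ)/(m:ℝ)) q ≠ 0 := fun i hi =>
      (hpos q hq _ (hpts x hx i hi).1.le).ne'
    simp only [hLdef]
    rw [← Real.log_prod hne, h,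
      Real.log_mul (hc q hq).ne'
        (hpos _ (hqpow q hq) _ (mul_nonneg hm0.le hx.1.le)).ne']
  -- first-derivative form
  have E1 : ∀ q ∈ Icc (0:ℝ) 1, ∀ x ∈ Ioo (0:ℝ) (1/(m:ℝ)),
      (∑ i ∈ Finset.range m, D1 q (x + (i:ℝ)/(m:ℝ))) =
        (m:ℝ) * D1 (q ^ ((1:ℝ)/(m:ℝ))) ((m:ℝ)*x) := by
    intro q hq x hx
    have hs : Ioo (0:ℝ) (1/(m:ℝ)) ∈ 𝓝 x := Ioo_mem_nhds hx.1 hx.2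
    have hA : HasDerivAt (fun y => ∑ i ∈ Finset.range m, L q (y + (i:ℝ)/(m:ℝ)))
        (∑ i ∈ Finset.range m, D1 q (x + (i:ℝ)/(m:ℝ))) x := by
      apply HasDerivAt.fun_sum
      intro i hi
      have h := (key q hq _ (hpts x hx i hi)).1
      have h2 := h.comp x ((hasDerivAt_id x).add_const ((i:ℝ)/(m:ℝ)))
      simpa [Function.comp_def] using h2
    have hB : HasDerivAt (fun y => Real.log (c q) + L (q ^ ((1:ℝ)/(m:ℝ))) ((m:ℝ)*y))
        ((m:ℝ) * D1 (q ^ ((1:ℝ)/(m:ℝ))) ((m:ℝ)*x)) x := by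
      have h := (key _ (hqpow q hq) _ (hmxmem x hx)).1
      have h2 := (h.comp x ((hasDerivAt_id x).const_mul (m:ℝ))).const_add (Real.log (c q))
      simpa [Function.comp, mul_comm] using h2
    have hB' : HasDerivAt (fun y => ∑ i ∈ Finset.range m, L q (y + (i:ℝ)/(m:ℝ)))
        ((m:ℝ) * D1 (q ^ ((1:ℝ)/(m:ℝ))) ((m:ℝ)*x)) x := by
      apply hB.congr_of_eventuallyEq
      filter_upwards [hs] with y hy using E0 q hq y hy
    exact hA.unique hB'
  -- second-derivative form
  have E2 : ∀ q ∈ Icc (0:ℝ) 1, ∀ x ∈ Ioo (0:ℝ) (1/(m:ℝ)),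
      (∑ i ∈ Finset.range m, D2 q (x + (i:ℝ)/(m:ℝ))) =
        (m:ℝ) * ((m:ℝ) * D2 (q ^ ((1:ℝ)/(m:ℝ))) ((m:ℝ)*x)) := by
    intro q hq x hx
    have hs : Ioo (0:ℝ) (1/(m:ℝ)) ∈ 𝓝 x := Ioo_mem_nhds hx.1 hx.2
    have hA : HasDerivAt (fun y => ∑ i ∈ Finset.range m, D1 q (y + (i:ℝ)/(m:ℝ)))
        (∑ i ∈ Finset.range m, D2 q (x + (i:ℝ)/(m:ℝ))) x := by
      apply HasDerivAt.fun_sum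
      intro i hi
      have h := (key q hq _ (hpts x hx i hi)).2.1
      have h2 := h.comp x ((hasDerivAt_id x).add_const ((i:ℝ)/(m:ℝ)))
      simpa [Function.comp_def] using h2
    have hB : HasDerivAt (fun y => (m:ℝ) * D1 (q ^ ((1:ℝ)/(m:ℝ))) ((m:ℝ)*y))
        ((m:ℝ) * ((m:ℝ) * D2 (q ^ ((1:ℝ)/(m:ℝ))) ((m:ℝ)*x))) x := by
      have h := (key _ (hqpow q hq) _ (hmxmem x hx)).2.1
      have h2 := (h.comp x ((hasDerivAt_id x).const_mul (m:ℝ))).const_mul (m:ℝ)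
      simpa [Function.comp, mul_comm, mul_left_comm] using h2
    have hB' : HasDerivAt (fun y => ∑ i ∈ Finset.range m, D1 q (y + (i:ℝ)/(m:ℝ)))
        ((m:ℝ) * ((m:ℝ) * D2 (q ^ ((1:ℝ)/(m:ℝ))) ((m:ℝ)*x))) x := by
      apply hB.congr_of_eventuallyEq
      filter_upwards [hs] with y hy using E1 q hq y hy
    exact hA.unique hB'
  -- contraction estimate by induction
  have hCm : ∀ n : ℕ, ∀ q ∈ Icc (0:ℝ) 1, ∀ x ∈ Ioo (0:ℝ) 1, |D2 q x| ≤ C / (m:ℝ)^n := by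
    intro n
    induction n with
    | zero => intro q hq x hx; simpa using (key q hq x hx).2.2
    | succ n ih =>
      intro q hq x hx
      have hqm : q^m ∈ Icc (0:ℝ) 1 := ⟨pow_nonneg hq.1 m, pow_le_one₀ hq.1 hq.2⟩
      have hroot : (q^m : ℝ) ^ ((1:ℝ)/(m:ℝ)) = q := by
        rw [← Real.rpow_natCast q m, ← Real.rpow_mul hq.1, mul_one_div, div_self hmne,
          Real.rpow_one]
      have hxm : x/(m:ℝ) ∈ Ioo (0:ℝ) (1/(m:ℝ)) := by
        constructor
        · exact div_pos hx.1 hm0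
        · exact (div_lt_div_iff_of_pos_right hm0).2 hx.2
      have hE := E2 (q^m) hqm (x/(m:ℝ)) hxm
      have hmx' : (m:ℝ)*(x/(m:ℝ)) = x := by field_simp
      rw [hroot, hmx'] at hE
      have hsum : |∑ i ∈ Finset.range m, D2 (q^m) (x/(m:ℝ) + (i:ℝ)/(m:ℝ))| ≤
          (m:ℝ) * (C / (m:ℝ)^n) := by
        calc |∑ i ∈ Finset.range m, D2 (q^m) (x/(m:ℝ) + (i:ℝ)/(m:ℝ))|
            ≤ ∑ i ∈ Finset.range m, |D2 (q^m) (x/(m:ℝ) + (i:ℝ)/(m:ℝ))| :=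
              Finset.abs_sum_le_sum_abs _ _
          _ ≤ ∑ _i ∈ Finset.range m, C/(m:ℝ)^n :=
              Finset.sum_le_sum (fun i hi => ih (q^m) hqm _ (hpts _ hxm i hi))
          _ = (m:ℝ) * (C/(m:ℝ)^n) := by
              rw [Finset.sum_const, Finset.card_range, nsmul_eq_mul]
      rw [hE, abs_mul, abs_mul, abs_of_pos hm0] at hsum
      have h2 : (m:ℝ) * |D2 q x| ≤ C/(m:ℝ)^n := le_of_mul_le_mul_left hsum hm0
      rw [pow_succ, ← div_div]
      exact (le_div_iff₀' hm0).2 h2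
  have hD2zero : ∀ q ∈ Icc (0:ℝ) 1, ∀ x ∈ Ioo (0:ℝ) 1, D2 q x = 0 := by
    intro q hq x hx
    have ht : Filter.Tendsto (fun n : ℕ => C / (m:ℝ)^n) Filter.atTop (𝓝 0) :=
      Filter.Tendsto.const_div_atTop (tendsto_pow_atTop_atTop_of_one_lt hm1) C
    have hle : |D2 q x| ≤ 0 := ge_of_tendsto' ht (fun n => hCm n q hq x hx)
    exact abs_eq_zero.1 (le_antisymm hle (abs_nonneg _))
  -- constancy on [0,1]
  have hIccconst : ∀ q ∈ Icc (0:ℝ) 1, ∀ x ∈ Icc (0:ℝ) 1, φ x q = φ 0 q := by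
    intro q hq
    have zero_deriv_const : ∀ f : ℝ → ℝ, (∀ x ∈ Ioo (0:ℝ) 1, HasDerivAt f 0 x) →
        ∀ x ∈ Ioo (0:ℝ) 1, ∀ y ∈ Ioo (0:ℝ) 1, f x = f y := by
      intro f hf
      have hab : ∀ a ∈ Ioo (0:ℝ) 1, ∀ b ∈ Ioo (0:ℝ) 1, a ≤ b → f b = f a := by
        intro a ha b hb hle
        have hIccsub : Icc a b ⊆ Ioo (0:ℝ) 1 := fun z hz =>
          ⟨lt_of_lt_of_le ha.1 hz.1, lt_of_le_of_lt hz.2 hb.2⟩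
        have hcont' : ContinuousOn f (Icc a b) := fun z hz =>
          ((hf z (hIccsub hz)).continuousAt).continuousWithinAt
        exact constant_of_has_deriv_right_zero hcont'
          (fun z hz => (hf z (hIccsub (Ico_subset_Icc_self hz))).hasDerivWithinAt)
          b (right_mem_Icc.2 hle)
      intro x hx y hy
      rcases le_total x y with h | h
      · exact (hab x hx y hy h).symm
      · exact hab y hy x hx h
    have hD1const := zero_deriv_const (D1 q)
      (fun x hx => hD2zero q hq x hx ▸ (key q hq x hx).2.1)
    have hhalf : (1/2:ℝ) ∈ Ioo (0:ℝ) 1 := by norm_num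
    set k : ℝ := D1 q (1/2) with hkdef
    have hLlin := zero_deriv_const (fun y => L q y - k * y) (by
      intro x hx
      have h1 := (key q hq x hx).1
      have h2 : HasDerivAt (fun y : ℝ => k * y) k x := by
        simpa using (hasDerivAt_id x).const_mul k
      have h3 := h1.sub h2
      have h4 : D1 q x - k = 0 := by
        rw [hkdef, hD1const x hx (1/2) hhalf]; ring
      rwa [h4] at h3)
    set b0 : ℝ := L q (1/2) - k * (1/2) with hb0def
    have hlin : ∀ y ∈ Ioo (0:ℝ) 1, L q y = k * y + b0 := by
      intro y hy
      have := hLlin y hy (1/2) hhalf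
      rw [hb0def]; linarith
    have hLcont : ContinuousOn (L q) (Icc (0:ℝ) 1) := by
      simp only [hLdef]
      exact ContinuousOn.log ((hC2 q hq).continuousOn) (fun z hz => (hpos q hq z hz.1).ne')
    have hend : ∀ z ∈ Icc (0:ℝ) 1, L q z = k * z + b0 := by
      intro z hz
      have hzcl : z ∈ closure (Ioo (0:ℝ) 1) := by
        rw [closure_Ioo (zero_ne_one)]; exact hz
      have hnb : (𝓝[Ioo (0:ℝ) 1] z).NeBot := mem_closure_iff_nhdsWithin_neBot.1 hzcl
      have t1 : Filter.Tendsto (L q) (𝓝[Ioo (0:ℝ) 1] z) (𝓝 (L q z)) :=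
        (hLcont z hz).mono_left (nhdsWithin_mono _ hIoosub)
      have t2 : Filter.Tendsto (fun y => k * y + b0) (𝓝[Ioo (0:ℝ) 1] z) (𝓝 (k * z + b0)) :=
        (Continuous.tendsto ((continuous_const.mul continuous_id).add continuous_const) z).mono_left nhdsWithin_le_nhds
      have t1' : Filter.Tendsto (fun y => k * y + b0) (𝓝[Ioo (0:ℝ) 1] z) (𝓝 (L q z)) := by
        apply t1.congr'
        filter_upwards [self_mem_nhdsWithin] with y hy using hlin y hy
      exact tendsto_nhds_unique t1' t2
    have hper0 : φ 1 q = φ 0 q := by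
      have := hper q hq 0 le_rfl
      simpa using this
    have hL10 : L q 1 = L q 0 := by simp only [hLdef]; rw [hper0]
    have hk : k = 0 := by
      have h1 := hend 1 (right_mem_Icc.2 zero_le_one)
      have h0 := hend 0 (left_mem_Icc.2 zero_le_one)
      rw [h1, h0] at hL10
      linarith
    intro x hx
    have hLx : L q x = L q 0 := by
      rw [hend x hx, hend 0 (left_mem_Icc.2 zero_le_one), hk]; ring
    have e1 : φ x q = Real.exp (L q x) := (Real.exp_log (hpos q hq x hx.1)).symm
    have e0 : φ 0 q = Real.exp (L q 0) := (Real.exp_log (hpos q hq 0 le_rfl)).symm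
    rw [e1, e0, hLx]
  -- conclude using periodicity
  intro q hq x hx y hy
  have per : ∀ n : ℕ, ∀ t : ℝ, 0 ≤ t → φ (t + n) q = φ t q := by
    intro n
    induction n with
    | zero => intro t ht; simp
    | succ n ih =>
      intro t ht
      have h1 : (t + ((n:ℝ)+1)) = (t + n) + 1 := by ring
      have h2 : ((n+1 : ℕ) : ℝ) = (n:ℝ) + 1 := by push_cast; ring
      rw [h2, h1, hper q hq (t + n) (by positivity), ih t ht]
  have hmain : ∀ z : ℝ, 0 ≤ z → φ z q = φ 0 q := by
    intro z hz
    have h1 : z = (z - (⌊z⌋₊:ℝ)) + (⌊z⌋₊ : ℝ) := by ring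
    have ht0 : 0 ≤ z - (⌊z⌋₊:ℝ) := sub_nonneg.2 (Nat.floor_le hz)
    have ht1 : z - (⌊z⌋₊:ℝ) ≤ 1 := by
      have := Nat.lt_floor_add_one z
      linarith
    rw [h1, per ⌊z⌋₊ _ ht0, hIccconst q hq _ ⟨ht0, ht1⟩]
  rw [hmain x hx, hmain y hy]
end
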